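/- arXiv:2402.11263 — 5 statements merged into one kernel-verified Lean document; each statement's English description precedes it below -/
import Mathlib

section
/- Let (X, d) be a compact metric space, f : X → X a continuous map, and (μ_{n_k}) a sequence of Borel probability measures converging weakly to a Borel probability measure μ. Suppose for each j ≥ 0 a set H_j is given, each H_j either empty or a singleton, and let H_∞ = ⋂_{m≥1} closure(⋃_{j≥m} H_j). If there is θ > 0 such that μ_{n_k}(⋃_{0≤j≤n_k−1} H_j) > θ for all k, and each μ_{n_k} assigns mass at most 1/n_k to any singleton, then μ(H_∞) ≥ limsup_k μ_{n_k}(⋃_{0≤j≤n_k−1} H_j) ≥ θ. -/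
open MeasureTheory Filter Topology
open scoped ENNReal

private lemma limsup_add_le_aux {u v : ℕ → ℝ≥0∞}
    (hu : Filter.Tendsto u Filter.atTop (nhds 0)) :
    Filter.limsup (fun k => u k + v k) Filter.atTop ≤ Filter.limsup v Filter.atTop := by
  by_cases hb : Filter.limsup v Filter.atTop = ⊤
  · simp [hb]
  refine ENNReal.le_of_forall_pos_le_add fun ε hε _ => ?_
  have hε2 : (0 : ℝ≥0∞) < (ε : ℝ≥0∞) / 2 :=
    ENNReal.half_pos (by exact_mod_cast hε.ne')
  have h1 : ∀ᶠ k in Filter.atTop, u k < (ε : ℝ≥0∞) / 2 := hu.eventually (gt_mem_nhds hε2)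
  have h2 : ∀ᶠ k in Filter.atTop,
      v k < Filter.limsup v Filter.atTop + (ε : ℝ≥0∞) / 2 :=
    Filter.eventually_lt_of_limsup_lt (ENNReal.lt_add_right hb hε2.ne')
  refine Filter.limsup_le_of_le Filter.isCobounded_le_of_bot ?_
  filter_upwards [h1, h2] with k hk1 hk2
  calc u k + v k ≤ (ε : ℝ≥0∞) / 2 + (Filter.limsup v Filter.atTop + (ε : ℝ≥0∞) / 2) :=
        add_le_add hk1.le hk2.le
    _ = Filter.limsup v Filter.atTop + (ε : ℝ≥0∞) := by
        rw [add_comm ((ε : ℝ≥0∞) / 2), add_assoc, ENNReal.add_halves]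

/-- Claim 2.3 of the paper: if empirical-type probability measures `ν k` converge weakly
to `μ`, each set `H j` is empty or a singleton, the mass of each singleton under `ν k` is at
most `1/(n k)`, and `ν k (⋃_{j < n k} H j) > θ`, then
`μ(H_∞) ≥ limsup_k ν k (⋃_{j < n k} H j) ≥ θ`, where `H_∞` is the topological limit set. -/
theorem stmt_1 {X : Type*} [MetricSpace X] [CompactSpace X]
    [MeasurableSpace X] [BorelSpace X]
    (f : X → X) (hf : Continuous f)
    (n : ℕ → ℕ) (hn : StrictMono n)
    (ν : ℕ → ProbabilityMeasure X) (μ : ProbabilityMeasure X)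
    (hconv : Tendsto ν atTop (𝓝 μ))
    (H : ℕ → Set X) (hH : ∀ j, H j = ∅ ∨ ∃ x, H j = {x})
    (θ : ℝ≥0∞) (hθ : 0 < θ)
    (hmass : ∀ k, θ < (ν k : Measure X) (⋃ j ∈ Finset.range (n k), H j))
    (hsingle : ∀ k (x : X), (ν k : Measure X) {x} ≤ 1 / (n k : ℝ≥0∞)) :
    θ ≤ limsup (fun k => (ν k : Measure X) (⋃ j ∈ Finset.range (n k), H j)) atTop ∧
    limsup (fun k => (ν k : Measure X) (⋃ j ∈ Finset.range (n k), H j)) atTop ≤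
      (μ : Measure X) (⋂ m ∈ Set.Ici 1, closure (⋃ j ∈ Set.Ici m, H j)) := by
  set S : ℕ → Set X := fun m => closure (⋃ j ∈ Set.Ici m, H j) with hS
  have hanti : Antitone S := fun a b hab =>
    closure_mono (Set.biUnion_mono (Set.Ici_subset_Ici.2 hab) fun _ _ => subset_rfl)
  constructor
  · exact le_limsup_of_frequently_le
      (Eventually.frequently (Eventually.of_forall fun k => (hmass k).le))
  · -- the intersection over `m ≥ 1` equals the intersection over all `m`
    have hset : (⋂ m ∈ Set.Ici 1, S m) = ⋂ m, S m := by
      apply Set.Subset.antisymm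
      · intro x hx
        simp only [Set.mem_iInter, Set.mem_Ici] at hx ⊢
        intro m
        rcases Nat.eq_zero_or_pos m with hm | hm
        · exact hm ▸ hanti (Nat.zero_le 1) (hx 1 le_rfl)
        · exact hx m hm
      · intro x hx
        simp only [Set.mem_iInter, Set.mem_Ici] at hx ⊢
        exact fun m _ => hx m
    rw [hset]
    have hmeas : ∀ m, NullMeasurableSet (S m) (μ : Measure X) :=
      fun m => (isClosed_closure.measurableSet).nullMeasurableSet
    rw [Antitone.measure_iInter hanti hmeas ⟨0, measure_ne_top _ _⟩]
    refine le_iInf fun m => ?_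
    -- key bound for fixed m
    have hsub : ∀ k, (⋃ j ∈ Finset.range (n k), H j) ⊆
        (⋃ j ∈ Finset.range m, H j) ∪ S m := by
      intro k
      refine Set.iUnion₂_subset fun j _ x hx => ?_
      by_cases hjm : j < m
      · exact Or.inl (Set.mem_biUnion (Finset.mem_range.2 hjm) hx)
      · exact Or.inr (subset_closure (Set.mem_biUnion (le_of_not_gt hjm) hx))
    have hbound : ∀ k, (ν k : Measure X) (⋃ j ∈ Finset.range (n k), H j) ≤
        (m : ℝ≥0∞) / (n k : ℝ≥0∞) + (ν k : Measure X) (S m) := by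
      intro k
      refine (measure_mono (hsub k)).trans ?_
      refine (measure_union_le _ _).trans (add_le_add ?_ le_rfl)
      calc (ν k : Measure X) (⋃ j ∈ Finset.range m, H j)
          ≤ ∑ j ∈ Finset.range m, (ν k : Measure X) (H j) :=
            measure_biUnion_finset_le _ _
        _ ≤ ∑ _j ∈ Finset.range m, (1 : ℝ≥0∞) / (n k : ℝ≥0∞) := by
            refine Finset.sum_le_sum fun j _ => ?_
            rcases hH j with hj | ⟨x, hj⟩
            · simp [hj]
            · rw [hj]; exact hsingle k x
        _ = (m : ℝ≥0∞) * ((1 : ℝ≥0∞) / (n k : ℝ≥0∞)) := by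
            simp [Finset.sum_const, mul_comm]
        _ = (m : ℝ≥0∞) / (n k : ℝ≥0∞) := by rw [mul_one_div]
    have hzero : Tendsto (fun k => (m : ℝ≥0∞) / (n k : ℝ≥0∞)) atTop (𝓝 0) := by
      have h1 : Tendsto (fun k => ((n k : ℝ≥0∞))⁻¹) atTop (𝓝 0) :=
        ENNReal.tendsto_inv_nat_nhds_zero.comp hn.tendsto_atTop
      have := ENNReal.Tendsto.const_mul h1 (Or.inr (ENNReal.natCast_ne_top m))
      simpa [div_eq_mul_inv] using this
    have hBle : ∀ (u : ℕ → ℝ≥0∞), IsBoundedUnder (· ≤ ·) atTop u :=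
      fun u => ⟨⊤, Eventually.of_forall fun _ => le_top⟩
    have hBge : ∀ (u : ℕ → ℝ≥0∞), IsBoundedUnder (· ≥ ·) atTop u :=
      fun u => ⟨⊥, Eventually.of_forall fun _ => bot_le⟩
    have hCle : ∀ (u : ℕ → ℝ≥0∞), IsCoboundedUnder (· ≤ ·) atTop u :=
      fun u => isCobounded_le_of_bot
    calc limsup (fun k => (ν k : Measure X) (⋃ j ∈ Finset.range (n k), H j)) atTop
        ≤ limsup (fun k => (m : ℝ≥0∞) / (n k : ℝ≥0∞) + (ν k : Measure X) (S m)) atTop :=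
          limsup_le_limsup (Eventually.of_forall hbound) (hCle _) (hBle _)
      _ ≤ limsup (fun k => (ν k : Measure X) (S m)) atTop := limsup_add_le_aux hzero
      _ ≤ (μ : Measure X) (S m) :=
          ProbabilityMeasure.limsup_measure_closed_le_of_tendsto hconv isClosed_closure
end

section
/- Let f : X → X be a measurable map preserving a Borel probability measure μ on a compact metric space X, and let (φ_n) be a sub-additive sequence of continuous functions, i.e. φ_{n+m}(x) ≤ φ_n(x) + φ_m(f^n x) for all n, m and x. Suppose γ_1 < γ_2 and lim_{n→∞} φ_n(x)/n ≤ γ_1 for μ-almost every x. Then for every θ ∈ (0,1) there exists ℓ_0 ∈ ℕ such that for every ℓ ≥ ℓ_0, the set of points x for which the lower density of T_ℓ(Φ, x, γ_2) := { n : (1/(kℓ))·Σ_{i=n−k}^{n−1} φ_ℓ(f^{iℓ} x) ≤ γ_2 for all 1 ≤ k ≤ n } is at least θ, has μ-measure greater than θ. -/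
open MeasureTheory Filter Topology

open scoped Classical in
/-- The lower density of a set of natural numbers. -/
noncomputable def lowerDensity (A : Set ℕ) : ℝ :=
  liminf (fun n => (((Finset.range n).filter fun i => i ∈ A).card : ℝ) / n) atTop

set_option linter.unusedSectionVars false
set_option maxHeartbeats 1000000

section Maximal

variable {X : Type*} [MeasurableSpace X] {μ : Measure X} [IsProbabilityMeasure μ]
variable {T : X → X}

lemma integrable_of_bdd {g : X → ℝ} (hg : Measurable g) {C : ℝ} (hb : ∀ x, |g x| ≤ C) :
    Integrable g μ :=
  (integrable_const C).mono' hg.aestronglyMeasurable (ae_of_all _ (by simpa using hb))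

lemma integral_comp_eq (hT : MeasurePreserving T μ μ) {g : X → ℝ}
    (hg : Measurable g) : ∫ x, g (T x) ∂μ = ∫ x, g x ∂μ := by
  rw [← MeasureTheory.integral_map hT.measurable.aemeasurable hg.aestronglyMeasurable, hT.map_eq]

/-- Partial maxima of Birkhoff sums, starting from `S_0 = 0`. -/
noncomputable def maxBS (T : X → X) (ψ : X → ℝ) : ℕ → X → ℝ
  | 0 => fun _ => 0
  | (N + 1) => fun x => max (maxBS T ψ N x) (birkhoffSum T ψ (N + 1) x)

lemma maxBS_nonneg (ψ : X → ℝ) (N : ℕ) (x : X) : 0 ≤ maxBS T ψ N x := by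
  induction N with
  | zero => simp [maxBS]
  | succ N ih => exact le_trans ih (le_max_left _ _)

lemma birkhoffSum_le_maxBS (ψ : X → ℝ) {n N : ℕ} (h : n ≤ N) (x : X) :
    birkhoffSum T ψ n x ≤ maxBS T ψ N x := by
  induction N with
  | zero => interval_cases n <;> simp [maxBS]
  | succ N ih =>
    rcases Nat.lt_or_ge n (N+1) with h'|h'
    · exact le_trans (ih (by omega)) (le_max_left _ _)
    · have : n = N + 1 := by omega
      subst this; exact le_max_right _ _

lemma maxBS_pos_exists (ψ : X → ℝ) {N : ℕ} {x : X} (h : 0 < maxBS T ψ N x) :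
    ∃ n, 1 ≤ n ∧ n ≤ N ∧ maxBS T ψ N x = birkhoffSum T ψ n x := by
  induction N with
  | zero => simp [maxBS] at h
  | succ N ih =>
    rcases le_or_gt (birkhoffSum T ψ (N+1) x) (maxBS T ψ N x) with h'|h'
    · have hm : maxBS T ψ (N+1) x = maxBS T ψ N x := max_eq_left h'
      rw [hm] at h ⊢
      obtain ⟨n, h1, h2, h3⟩ := ih h
      exact ⟨n, h1, by omega, h3⟩
    · refine ⟨N+1, by omega, le_rfl, ?_⟩
      simpa [maxBS] using max_eq_right h'.le

lemma maxBS_measurable (hT : Measurable T) {ψ : X → ℝ} (hψ : Measurable ψ) (N : ℕ) :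
    Measurable (maxBS T ψ N) := by
  induction N with
  | zero => simpa [maxBS] using measurable_const
  | succ N ih =>
    exact ih.max (Finset.measurable_sum _ (fun i _ => hψ.comp (hT.iterate i)))

lemma maxBS_bdd (ψ : X → ℝ) {C : ℝ} (hC : 0 ≤ C) (hb : ∀ x, |ψ x| ≤ C) (N : ℕ) (x : X) :
    |maxBS T ψ N x| ≤ N * C := by
  rw [abs_le]
  constructor
  · linarith [maxBS_nonneg (T := T) ψ N x, mul_nonneg (Nat.cast_nonneg (α := ℝ) N) hC]
  · induction N with
    | zero => simp [maxBS]
    | succ N ih =>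
      have hS : birkhoffSum T ψ (N+1) x ≤ (N+1 : ℕ) * C := by
        calc birkhoffSum T ψ (N+1) x ≤ ∑ i ∈ Finset.range (N+1), C :=
              Finset.sum_le_sum (fun i _ => (abs_le.mp (hb _)).2)
        _ = (N+1 : ℕ) * C := by simp [mul_comm]
      have : (N : ℝ) * C ≤ (N+1 : ℕ) * C := by
        push_cast; nlinarith
      exact max_le (le_trans ih this) hS

/-- Garsia's maximal ergodic theorem, indicator form. -/
theorem maximal_ergodic (hT : MeasurePreserving T μ μ) {ψ : X → ℝ} (hψ : Measurable ψ)
    {C : ℝ} (hC : 0 ≤ C) (hb : ∀ x, |ψ x| ≤ C) :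
    0 ≤ ∫ x, Set.indicator {y | ∃ n, 1 ≤ n ∧ 0 < birkhoffSum T ψ n y} ψ x ∂μ := by
  set E : Set X := {y | ∃ n, 1 ≤ n ∧ 0 < birkhoffSum T ψ n y} with hE
  set EN : ℕ → Set X := fun N => {y | 0 < maxBS T ψ N y} with hEN
  have hSmeas : ∀ n, Measurable (fun y => birkhoffSum T ψ n y) :=
    fun n => Finset.measurable_sum _ (fun i _ => hψ.comp (hT.measurable.iterate i))
  have hENmeas : ∀ N, MeasurableSet (EN N) :=
    fun N => measurableSet_lt measurable_const (maxBS_measurable hT.measurable hψ N)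
  -- step 1 : for each N, 0 ≤ ∫ indicator (EN N) ψ
  have step1 : ∀ N, 0 ≤ ∫ x, Set.indicator (EN N) ψ x ∂μ := by
    intro N
    have key : ∀ x, maxBS T ψ N x - maxBS T ψ N (T x) ≤ Set.indicator (EN N) ψ x := by
      intro x
      by_cases hx : x ∈ EN N
      · rw [Set.indicator_of_mem hx]
        obtain ⟨n, h1, h2, h3⟩ := maxBS_pos_exists ψ hx
        obtain ⟨m, rfl⟩ : ∃ m, n = m + 1 := ⟨n - 1, by omega⟩
        have hsucc : birkhoffSum T ψ (m+1) x = ψ x + birkhoffSum T ψ m (T x) :=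
          birkhoffSum_succ' T ψ m x
        have : birkhoffSum T ψ m (T x) ≤ maxBS T ψ N (T x) :=
          birkhoffSum_le_maxBS ψ (by omega) (T x)
        rw [h3, hsucc]; linarith
      · rw [Set.indicator_of_notMem hx]
        have h0 : maxBS T ψ N x = 0 := le_antisymm (not_lt.mp hx) (maxBS_nonneg ψ N x)
        have := maxBS_nonneg (T := T) ψ N (T x)
        rw [h0]; linarith
    have hMint : Integrable (maxBS T ψ N) μ :=
      integrable_of_bdd (maxBS_measurable hT.measurable hψ N) (maxBS_bdd ψ hC hb N)
    have hMTint : Integrable (fun x => maxBS T ψ N (T x)) μ :=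
      integrable_of_bdd ((maxBS_measurable hT.measurable hψ N).comp hT.measurable)
        (fun x => maxBS_bdd ψ hC hb N (T x))
    have hIint : Integrable (Set.indicator (EN N) ψ) μ := by
      refine integrable_of_bdd (hψ.indicator (hENmeas N)) (C := C) (fun x => ?_)
      rw [Set.indicator]
      split_ifs
      · exact hb x
      · simpa using hC
    have : ∫ x, (maxBS T ψ N x - maxBS T ψ N (T x)) ∂μ
        ≤ ∫ x, Set.indicator (EN N) ψ x ∂μ := integral_mono (hMint.sub hMTint) hIint key
    rwa [integral_sub hMint hMTint,
      integral_comp_eq hT (maxBS_measurable hT.measurable hψ N), sub_self] at this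
  -- step 2 : N → ∞
  have hconv : ∀ x, Tendsto (fun N => Set.indicator (EN N) ψ x) atTop
      (𝓝 (Set.indicator E ψ x)) := by
    intro x
    by_cases hx : x ∈ E
    · obtain ⟨n, h1, h2⟩ := id hx
      have : ∀ N ≥ n, Set.indicator (EN N) ψ x = Set.indicator E ψ x := by
        intro N hN
        have hxN : x ∈ EN N := lt_of_lt_of_le h2 (birkhoffSum_le_maxBS ψ hN x)
        rw [Set.indicator_of_mem hxN, Set.indicator_of_mem hx]
      exact tendsto_const_nhds.congr' (eventually_atTop.mpr ⟨n, fun N hN => (this N hN).symm⟩)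
    · have heq : ∀ N, Set.indicator (EN N) ψ x = Set.indicator E ψ x := by
        intro N
        have hxN : x ∉ EN N := by
          intro hxN
          obtain ⟨n, h1, h2, h3⟩ := maxBS_pos_exists ψ hxN
          refine hx ⟨n, h1, ?_⟩
          rw [← h3]; exact hxN
        rw [Set.indicator_of_notMem hxN, Set.indicator_of_notMem hx]
      exact tendsto_const_nhds.congr (fun N => (heq N).symm)
  have hlim : Tendsto (fun N => ∫ x, Set.indicator (EN N) ψ x ∂μ) atTop
      (𝓝 (∫ x, Set.indicator E ψ x ∂μ)) := by
    refine tendsto_integral_of_dominated_convergence (fun _ => C)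
      (fun N => ((hψ.indicator (hENmeas N)).aestronglyMeasurable)) (integrable_const C)
      (fun N => ae_of_all _ (fun x => ?_)) (ae_of_all _ hconv)
    rw [Set.indicator]
    split_ifs
    · exact hb x
    · simpa using hC
  exact ge_of_tendsto' hlim step1

end Maximal

section LimsupHelpers

lemma limsup_le_limsup_of_sub_tendsto {u v : ℕ → ℝ} {C : ℝ}
    (hu : ∀ k, |u k| ≤ C) (hv : ∀ k, |v k| ≤ C)
    (h : Tendsto (fun k => u k - v k) atTop (𝓝 0)) :
    limsup u atTop ≤ limsup v atTop := by
  have hub : IsBoundedUnder (· ≤ ·) atTop u := isBoundedUnder_of ⟨C, fun k => (abs_le.mp (hu k)).2⟩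
  have hvb : IsBoundedUnder (· ≤ ·) atTop v := isBoundedUnder_of ⟨C, fun k => (abs_le.mp (hv k)).2⟩
  have hucb : IsCoboundedUnder (· ≤ ·) atTop u :=
    IsBoundedUnder.isCoboundedUnder_le (isBoundedUnder_of ⟨-C, fun k => (abs_le.mp (hu k)).1⟩)
  have hvcb : IsCoboundedUnder (· ≤ ·) atTop v :=
    IsBoundedUnder.isCoboundedUnder_le (isBoundedUnder_of ⟨-C, fun k => (abs_le.mp (hv k)).1⟩)
  refine le_of_forall_pos_le_add (fun ε hε => ?_)
  have hev : ∀ᶠ k in atTop, u k ≤ v k + ε := by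
    filter_upwards [(tendsto_order.mp h).2 ε hε] with k hk
    linarith
  calc limsup u atTop ≤ limsup (fun k => v k + ε) atTop := by
        refine limsup_le_limsup hev hucb ?_
        exact isBoundedUnder_of ⟨C + ε, fun k => by linarith [(abs_le.mp (hv k)).2]⟩
  _ = limsup v atTop + ε := limsup_add_const atTop v ε hvb hvcb

lemma limsup_eq_limsup_of_sub_tendsto {u v : ℕ → ℝ} {C : ℝ}
    (hu : ∀ k, |u k| ≤ C) (hv : ∀ k, |v k| ≤ C)
    (h : Tendsto (fun k => u k - v k) atTop (𝓝 0)) :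
    limsup u atTop = limsup v atTop := by
  refine le_antisymm (limsup_le_limsup_of_sub_tendsto hu hv h)
    (limsup_le_limsup_of_sub_tendsto hv hu ?_)
  simpa using h.neg.congr (fun k => by ring)

lemma liminf_le_liminf_of_sub_tendsto {u v : ℕ → ℝ} {C : ℝ}
    (hu : ∀ k, |u k| ≤ C) (hv : ∀ k, |v k| ≤ C)
    (h : Tendsto (fun k => u k - v k) atTop (𝓝 0)) :
    liminf u atTop ≤ liminf v atTop := by
  have hub : IsBoundedUnder (· ≥ ·) atTop u := isBoundedUnder_of ⟨-C, fun k => (abs_le.mp (hu k)).1⟩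
  have hvb : IsBoundedUnder (· ≥ ·) atTop v := isBoundedUnder_of ⟨-C, fun k => (abs_le.mp (hv k)).1⟩
  have hvcb : IsCoboundedUnder (· ≥ ·) atTop v :=
    IsBoundedUnder.isCoboundedUnder_ge (isBoundedUnder_of ⟨C, fun k => (abs_le.mp (hv k)).2⟩)
  refine le_of_forall_pos_le_add (fun ε hε => ?_)
  have hev : ∀ᶠ k in atTop, u k ≤ v k + ε := by
    filter_upwards [(tendsto_order.mp h).2 ε hε] with k hk
    linarith
  calc liminf u atTop ≤ liminf (fun k => v k + ε) atTop := by
        refine liminf_le_liminf hev ?_ ?_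
        · exact isBoundedUnder_of ⟨-C, fun k => (abs_le.mp (hu k)).1⟩
        · exact IsBoundedUnder.isCoboundedUnder_ge
            (isBoundedUnder_of ⟨C + ε, fun k => by linarith [(abs_le.mp (hv k)).2]⟩)
  _ = liminf v atTop + ε := liminf_add_const atTop v ε hvcb hvb

lemma liminf_eq_liminf_of_sub_tendsto {u v : ℕ → ℝ} {C : ℝ}
    (hu : ∀ k, |u k| ≤ C) (hv : ∀ k, |v k| ≤ C)
    (h : Tendsto (fun k => u k - v k) atTop (𝓝 0)) :
    liminf u atTop = liminf v atTop := by
  refine le_antisymm (liminf_le_liminf_of_sub_tendsto hu hv h)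
    (liminf_le_liminf_of_sub_tendsto hv hu ?_)
  simpa using h.neg.congr (fun k => by ring)

end LimsupHelpers

section Birkhoff

variable {X : Type*} [MeasurableSpace X] {μ : Measure X} [IsProbabilityMeasure μ]
variable {T : X → X}

lemma abs_birkhoffSum_le {g : X → ℝ} {C : ℝ} (hb : ∀ x, |g x| ≤ C) (n : ℕ) (x : X) :
    |birkhoffSum T g n x| ≤ n * C := by
  calc |birkhoffSum T g n x| ≤ ∑ i ∈ Finset.range n, |g (T^[i] x)| :=
        Finset.abs_sum_le_sum_abs _ _
  _ ≤ ∑ i ∈ Finset.range n, C := Finset.sum_le_sum (fun i _ => hb _)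
  _ = n * C := by simp [mul_comm]

lemma abs_avg_le {g : X → ℝ} {C : ℝ} (hC : 0 ≤ C) (hb : ∀ x, |g x| ≤ C) (n : ℕ) (x : X) :
    |birkhoffSum T g n x / n| ≤ C := by
  rcases Nat.eq_zero_or_pos n with rfl|hn
  · simpa [birkhoffSum] using hC
  · rw [abs_div, abs_of_nonneg (by positivity : (0:ℝ) ≤ (n:ℝ))]
    rw [div_le_iff₀ (by exact_mod_cast hn)]
    calc |birkhoffSum T g n x| ≤ n * C := abs_birkhoffSum_le hb n x
    _ = C * n := mul_comm _ _

/-- Difference of Birkhoff averages at `T x` and `x` tends to `0`. -/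
lemma avg_diff_tendsto {g : X → ℝ} {C : ℝ} (hC : 0 ≤ C) (hb : ∀ x, |g x| ≤ C) (x : X) :
    Tendsto (fun k => birkhoffSum T g k (T x) / k - birkhoffSum T g k x / k) atTop (𝓝 0) := by
  have key : ∀ k : ℕ, 1 ≤ k →
      ‖birkhoffSum T g k (T x) / k - birkhoffSum T g k x / k‖ ≤ 2 * C / k := by
    intro k hk
    have hkpos : (0:ℝ) < k := by exact_mod_cast hk
    have hdiff : birkhoffSum T g k (T x) - birkhoffSum T g k x = g (T^[k] x) - g x :=
      birkhoffSum_apply_sub_birkhoffSum T g k x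
    rw [div_sub_div_same, Real.norm_eq_abs, hdiff, abs_div,
      abs_of_nonneg hkpos.le, div_le_div_iff₀ hkpos hkpos]
    have hd : |g (T^[k] x) - g x| ≤ 2 * C := by
      have h3 := abs_sub (g (T^[k] x)) (g x)
      linarith [hb (T^[k] x), hb x]
    exact mul_le_mul_of_nonneg_right hd hkpos.le
  refine squeeze_zero_norm' (eventually_atTop.mpr ⟨1, key⟩) ?_
  simpa using tendsto_const_div_atTop_nhds_zero_nat (2*C)

lemma limsup_avg_comp_eq {g : X → ℝ} {C : ℝ} (hC : 0 ≤ C) (hb : ∀ x, |g x| ≤ C) (x : X) :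
    limsup (fun k => birkhoffSum T g k (T x) / k) atTop
      = limsup (fun k => birkhoffSum T g k x / k) atTop :=
  limsup_eq_limsup_of_sub_tendsto (fun k => abs_avg_le hC hb k (T x))
    (fun k => abs_avg_le hC hb k x) (avg_diff_tendsto hC hb x)

lemma liminf_avg_comp_eq {g : X → ℝ} {C : ℝ} (hC : 0 ≤ C) (hb : ∀ x, |g x| ≤ C) (x : X) :
    liminf (fun k => birkhoffSum T g k (T x) / k) atTop
      = liminf (fun k => birkhoffSum T g k x / k) atTop :=
  liminf_eq_liminf_of_sub_tendsto (fun k => abs_avg_le hC hb k (T x))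
    (fun k => abs_avg_le hC hb k x) (avg_diff_tendsto hC hb x)

end Birkhoff
section BirkhoffThm

variable {X : Type*} [MeasurableSpace X] {μ : Measure X} [IsProbabilityMeasure μ]
variable {T : X → X}

lemma birkhoffSum_measurable (hT : Measurable T) {g : X → ℝ} (hg : Measurable g) (n : ℕ) :
    Measurable (fun x => birkhoffSum T g n x) :=
  Finset.measurable_sum _ (fun i _ => hg.comp (hT.iterate i))

/-- Maximal ergodic theorem applied to a function supported on an orbit-invariant set. -/
lemma maximal_on_invariant (hT : MeasurePreserving T μ μ) {ψ0 : X → ℝ} (hψ0 : Measurable ψ0)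
    {D : ℝ} (hD : 0 ≤ D) (hb : ∀ x, |ψ0 x| ≤ D)
    {E : Set X} (hEmeas : MeasurableSet E) (hEorb : ∀ (i : ℕ) (x : X), T^[i] x ∈ E ↔ x ∈ E)
    (hgt : ∀ x ∈ E, ∃ n, 1 ≤ n ∧ 0 < birkhoffSum T ψ0 n x) :
    0 ≤ ∫ x, Set.indicator E ψ0 x ∂μ := by
  set ψ : X → ℝ := Set.indicator E ψ0 with hψ
  have hψm : Measurable ψ := hψ0.indicator hEmeas
  have hψb : ∀ x, |ψ x| ≤ D := by
    intro x
    rw [hψ, Set.indicator]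
    split_ifs
    · exact hb x
    · simpa using hD
  have hSeq : ∀ (n : ℕ) (x : X), x ∈ E → birkhoffSum T ψ n x = birkhoffSum T ψ0 n x := by
    intro n x hx
    refine Finset.sum_congr rfl (fun i _ => ?_)
    exact Set.indicator_of_mem ((hEorb i x).mpr hx) ψ0
  have hset : {y | ∃ n, 1 ≤ n ∧ 0 < birkhoffSum T ψ n y} = E := by
    ext x
    simp only [Set.mem_setOf_eq]
    constructor
    · rintro ⟨n, hn, hpos⟩
      by_contra hx
      have : birkhoffSum T ψ n x = 0 := by
        refine Finset.sum_eq_zero (fun i _ => ?_)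
        exact Set.indicator_of_notMem (fun h => hx ((hEorb i x).mp h)) ψ0
      rw [this] at hpos; exact lt_irrefl 0 hpos
    · intro hx
      obtain ⟨n, hn, hpos⟩ := hgt x hx
      exact ⟨n, hn, by rwa [hSeq n x hx]⟩
  have := maximal_ergodic hT hψm hD hψb
  rw [hset] at this
  have heq : ∀ x, Set.indicator E ψ x = ψ x := by
    intro x
    rw [hψ, Set.indicator_indicator, Set.inter_self]
  simpa only [heq] using this

/-- Birkhoff's pointwise ergodic theorem for bounded measurable functions. -/
theorem birkhoff_ae (hT : MeasurePreserving T μ μ) {g : X → ℝ} (hg : Measurable g)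
    {C : ℝ} (hC : 0 ≤ C) (hb : ∀ x, |g x| ≤ C) :
    ∀ᵐ x ∂μ, Tendsto (fun k => birkhoffSum T g k x / k) atTop
      (𝓝 (limsup (fun k => birkhoffSum T g k x / k) atTop)) := by
  set avg : ℕ → X → ℝ := fun k x => birkhoffSum T g k x / k with havg
  have havgm : ∀ k, Measurable (avg k) := fun k =>
    (birkhoffSum_measurable hT.measurable hg k).div_const _
  set L : X → ℝ := fun x => limsup (fun k => avg k x) atTop with hL
  set l : X → ℝ := fun x => liminf (fun k => avg k x) atTop with hl
  have hLm : Measurable L := Measurable.limsup havgm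
  have hlm : Measurable l := Measurable.liminf havgm
  have habs : ∀ k x, |avg k x| ≤ C := fun k x => abs_avg_le hC hb k x
  have hbdd : ∀ x, IsBoundedUnder (· ≤ ·) atTop (fun k => avg k x) :=
    fun x => isBoundedUnder_of ⟨C, fun k => (abs_le.mp (habs k x)).2⟩
  have hbdd' : ∀ x, IsBoundedUnder (· ≥ ·) atTop (fun k => avg k x) :=
    fun x => isBoundedUnder_of ⟨-C, fun k => (abs_le.mp (habs k x)).1⟩
  have key : ∀ q r : ℚ, (q:ℝ) < (r:ℝ) → μ {x | l x < (q:ℝ) ∧ (r:ℝ) < L x} = 0 := by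
    intro q r hqr
    set E := {x | l x < (q:ℝ) ∧ (r:ℝ) < L x} with hE
    have hEmeas : MeasurableSet E :=
      (measurableSet_lt hlm measurable_const).inter (measurableSet_lt measurable_const hLm)
    have hinvL : ∀ x, L (T x) = L x := fun x => limsup_avg_comp_eq hC hb x
    have hinvl : ∀ x, l (T x) = l x := fun x => liminf_avg_comp_eq hC hb x
    have hEinv : ∀ x, T x ∈ E ↔ x ∈ E := by
      intro x
      simp only [hE, Set.mem_setOf_eq, hinvL x, hinvl x]
    have hEorb : ∀ (i : ℕ) (x : X), T^[i] x ∈ E ↔ x ∈ E := by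
      intro i
      induction i with
      | zero => intro x; simp
      | succ i ih =>
        intro x
        rw [Function.iterate_succ_apply, ih (T x), hEinv x]
    -- first application
    have h1 : 0 ≤ ∫ x, Set.indicator E (fun y => g y - (r:ℝ)) x ∂μ := by
      refine maximal_on_invariant hT (hg.sub measurable_const)
        (by positivity : (0:ℝ) ≤ C + |(r:ℝ)|) (fun x => ?_) hEmeas hEorb (fun x hx => ?_)
      · calc |g x - (r:ℝ)| ≤ |g x| + |(r:ℝ)| := abs_sub _ _
        _ ≤ C + |(r:ℝ)| := by linarith [hb x]
      · -- r < L x gives some avg k x > r with k ≥ 1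
        have hLx : (r:ℝ) < L x := hx.2
        by_contra hcon
        push_neg at hcon
        have hall : ∀ k, 1 ≤ k → avg k x ≤ (r:ℝ) := by
          intro k hk
          have hbs := hcon k hk
          have hkpos : (0:ℝ) < k := by exact_mod_cast hk
          have hsum : birkhoffSum T (fun y => g y - (r:ℝ)) k x
              = birkhoffSum T g k x - k * r := by
            simp only [birkhoffSum, Finset.sum_sub_distrib, Finset.sum_const,
              Finset.card_range, nsmul_eq_mul]
          change birkhoffSum T (fun y => g y - (r:ℝ)) k x ≤ 0 at hbs
          rw [hsum] at hbs
          have : birkhoffSum T g k x ≤ k * r := by linarith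
          rw [havg]
          rw [div_le_iff₀ hkpos]
          linarith [this]
        have : L x ≤ (r:ℝ) := by
          refine limsup_le_of_le (IsBoundedUnder.isCoboundedUnder_le
            (isBoundedUnder_of ⟨-C, fun k => (abs_le.mp (habs k x)).1⟩)) ?_
          exact eventually_atTop.mpr ⟨1, hall⟩
        linarith
    -- second application
    have h2 : 0 ≤ ∫ x, Set.indicator E (fun y => (q:ℝ) - g y) x ∂μ := by
      refine maximal_on_invariant hT (measurable_const.sub hg)
        (by positivity : (0:ℝ) ≤ |(q:ℝ)| + C) (fun x => ?_) hEmeas hEorb (fun x hx => ?_)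
      · calc |(q:ℝ) - g x| ≤ |(q:ℝ)| + |g x| := abs_sub _ _
        _ ≤ |(q:ℝ)| + C := by linarith [hb x]
      · have hlx : l x < (q:ℝ) := hx.1
        by_contra hcon
        push_neg at hcon
        have hall : ∀ k, 1 ≤ k → (q:ℝ) ≤ avg k x := by
          intro k hk
          have hbs := hcon k hk
          have hkpos : (0:ℝ) < k := by exact_mod_cast hk
          have hsum : birkhoffSum T (fun y => (q:ℝ) - g y) k x
              = k * q - birkhoffSum T g k x := by
            simp only [birkhoffSum, Finset.sum_sub_distrib, Finset.sum_const,
              Finset.card_range, nsmul_eq_mul]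
          change birkhoffSum T (fun y => (q:ℝ) - g y) k x ≤ 0 at hbs
          rw [hsum] at hbs
          have : k * q ≤ birkhoffSum T g k x := by linarith
          rw [havg, le_div_iff₀ hkpos]
          linarith [this]
        have : (q:ℝ) ≤ l x := by
          refine le_liminf_of_le (IsBoundedUnder.isCoboundedUnder_ge
            (isBoundedUnder_of ⟨C, fun k => (abs_le.mp (habs k x)).2⟩)) ?_
          exact eventually_atTop.mpr ⟨1, hall⟩
        linarith
    -- combine
    have hadd : (fun x => Set.indicator E (fun y => g y - (r:ℝ)) x
        + Set.indicator E (fun y => (q:ℝ) - g y) x)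
        = fun x => Set.indicator E (fun _ => (q:ℝ) - (r:ℝ)) x := by
      funext x
      by_cases hx : x ∈ E
      · rw [Set.indicator_of_mem hx, Set.indicator_of_mem hx, Set.indicator_of_mem hx]; ring
      · simp [Set.indicator_of_notMem hx]
    have hint1 : Integrable (Set.indicator E (fun y => g y - (r:ℝ))) μ := by
      refine integrable_of_bdd ((hg.sub measurable_const).indicator hEmeas)
        (C := C + |(r:ℝ)|) (fun x => ?_)
      rw [Set.indicator]
      split_ifs
      · calc |g x - (r:ℝ)| ≤ |g x| + |(r:ℝ)| := abs_sub _ _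
        _ ≤ C + |(r:ℝ)| := by linarith [hb x]
      · simp; positivity
    have hint2 : Integrable (Set.indicator E (fun y => (q:ℝ) - g y)) μ := by
      refine integrable_of_bdd ((measurable_const.sub hg).indicator hEmeas)
        (C := |(q:ℝ)| + C) (fun x => ?_)
      rw [Set.indicator]
      split_ifs
      · calc |(q:ℝ) - g x| ≤ |(q:ℝ)| + |g x| := abs_sub _ _
        _ ≤ |(q:ℝ)| + C := by linarith [hb x]
      · simp; positivity
    have hsum : 0 ≤ ∫ x, Set.indicator E (fun _ => (q:ℝ) - (r:ℝ)) x ∂μ := by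
      rw [← hadd, integral_add hint1 hint2]
      linarith
    rw [integral_indicator_const _ hEmeas] at hsum
    have hμfin : μ E ≠ ⊤ := measure_ne_top μ E
    have htr : (μ E).toReal = 0 := by
      by_contra htr
      have hpos : 0 < (μ E).toReal := lt_of_le_of_ne ENNReal.toReal_nonneg (Ne.symm htr)
      have : (μ E).toReal • ((q:ℝ) - (r:ℝ)) < 0 := by
        rw [smul_eq_mul]
        exact mul_neg_of_pos_of_neg hpos (by linarith)
      exact absurd hsum (not_le.mpr this)
    exact (ENNReal.toReal_eq_zero_iff _).mp htr |>.resolve_right hμfin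
  -- union over rational pairs
  have hnull : μ {x | l x < L x} = 0 := by
    have hsub : {x | l x < L x} ⊆ ⋃ (p : ℚ × ℚ),
        (if (p.1:ℝ) < (p.2:ℝ) then {x | l x < (p.1:ℝ) ∧ (p.2:ℝ) < L x} else ∅) := by
      intro x hx
      obtain ⟨q, hq1, hq2⟩ := exists_rat_btwn (show l x < L x from hx)
      obtain ⟨r, hr1, hr2⟩ := exists_rat_btwn hq2
      refine Set.mem_iUnion.mpr ⟨(q, r), ?_⟩
      rw [if_pos (by exact_mod_cast hr1)]
      exact ⟨hq1, hr2⟩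
    refine measure_mono_null hsub (measure_iUnion_null (fun p => ?_))
    by_cases hp : (p.1:ℝ) < (p.2:ℝ)
    · rw [if_pos hp]; exact key p.1 p.2 hp
    · rw [if_neg hp]; exact measure_empty
  have hae : ∀ᵐ x ∂μ, ¬ (l x < L x) := by
    rw [ae_iff]
    simpa using hnull
  filter_upwards [hae] with x hx
  have heq : l x = L x := le_antisymm (liminf_le_limsup (hbdd x) (hbdd' x)) (not_lt.mp hx)
  exact tendsto_of_liminf_eq_limsup heq rfl (hbdd x) (hbdd' x)

/-- The integral of the Birkhoff limit equals the integral of `g`. -/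
theorem integral_limsup_avg (hT : MeasurePreserving T μ μ) {g : X → ℝ} (hg : Measurable g)
    {C : ℝ} (hC : 0 ≤ C) (hb : ∀ x, |g x| ≤ C) :
    ∫ x, limsup (fun k => birkhoffSum T g k x / k) atTop ∂μ = ∫ x, g x ∂μ := by
  have hint : ∀ k : ℕ, ∫ x, birkhoffSum T g k x ∂μ = k * ∫ x, g x ∂μ := by
    intro k
    induction k with
    | zero => simp [birkhoffSum]
    | succ k ih =>
      have : ∀ x, birkhoffSum T g (k+1) x = birkhoffSum T g k x + g (T^[k] x) :=
        fun x => birkhoffSum_succ T g k x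
      have i1 : Integrable (fun x => birkhoffSum T g k x) μ :=
        integrable_of_bdd (birkhoffSum_measurable hT.measurable hg k) (abs_birkhoffSum_le hb k)
      have i2 : Integrable (fun x => g (T^[k] x)) μ :=
        integrable_of_bdd (g := fun x => g (T^[k] x)) (hg.comp (hT.measurable.iterate k))
          (fun x => hb (T^[k] x))
      rw [integral_congr_ae (ae_of_all _ this), integral_add i1 i2, ih,
        integral_comp_eq (hT.iterate k) hg]
      push_cast
      ring
  have h2 : ∀ k : ℕ, 1 ≤ k → ∫ x, birkhoffSum T g k x / k ∂μ = ∫ x, g x ∂μ := by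
    intro k hk
    have hkne : (k:ℝ) ≠ 0 := by positivity
    simp only [div_eq_mul_inv]
    rw [integral_mul_const, hint k]
    field_simp
  have h1 : Tendsto (fun k => ∫ x, birkhoffSum T g k x / k ∂μ) atTop
      (𝓝 (∫ x, limsup (fun j => birkhoffSum T g j x / j) atTop ∂μ)) := by
    refine tendsto_integral_of_dominated_convergence (fun _ => C)
      (fun k => ((birkhoffSum_measurable hT.measurable hg k).div_const _).aestronglyMeasurable)
      (integrable_const C) (fun k => ae_of_all _ (fun x => abs_avg_le hC hb k x))
      (birkhoff_ae hT hg hC hb)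
  have h3 : Tendsto (fun k => ∫ x, birkhoffSum T g k x / k ∂μ) atTop (𝓝 (∫ x, g x ∂μ)) := by
    refine Tendsto.congr' ?_ (tendsto_const_nhds : Tendsto (fun _ : ℕ => ∫ x, g x ∂μ) atTop _)
    exact eventually_atTop.mpr ⟨1, fun k hk => (h2 k hk).symm⟩
  exact tendsto_nhds_unique h1 h3

end BirkhoffThm
open scoped Classical

section Pliss

variable {a : ℕ → ℝ} {m γ' γ₂ : ℝ}

/-- running sum of `a i - γ₂`. -/
noncomputable def plS (a : ℕ → ℝ) (γ₂ : ℝ) (n : ℕ) : ℝ := ∑ i ∈ Finset.range n, (a i - γ₂)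

/-- Pliss times: record minima of `plS`. -/
def plP (a : ℕ → ℝ) (γ₂ : ℝ) : Set ℕ := {n | ∀ j < n, plS a γ₂ n ≤ plS a γ₂ j}

lemma pliss_induction (hm : ∀ i, m ≤ a i) (hγ : m ≤ γ₂) :
    ∀ N : ℕ, ∀ j ≤ N, -(γ₂ - m) *
      ((((Finset.range (N+1)).filter (fun n => n ∈ plP a γ₂)).card : ℝ) - 1) ≤ plS a γ₂ j := by
  intro N
  induction N with
  | zero =>
    intro j hj
    interval_cases j
    have h0 : (0:ℕ) ∈ plP a γ₂ := fun j hj => absurd hj (Nat.not_lt_zero j)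
    simp [plS, Finset.filter_singleton, h0]
  | succ N ih =>
    have hcnt_succ : ((Finset.range (N+2)).filter (fun n => n ∈ plP a γ₂)).card
        = ((Finset.range (N+1)).filter (fun n => n ∈ plP a γ₂)).card
          + (if (N+1) ∈ plP a γ₂ then 1 else 0) := by
      rw [Finset.range_add_one, Finset.filter_insert]
      split_ifs with h
      · rw [Finset.card_insert_of_notMem (by simp)]
      · simp
    set c : ℝ := (((Finset.range (N+1)).filter (fun n => n ∈ plP a γ₂)).card : ℝ) with hc
    set c' : ℝ := (((Finset.range (N+2)).filter (fun n => n ∈ plP a γ₂)).card : ℝ) with hc'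
    have hcc' : c ≤ c' := by
      rw [hc, hc', hcnt_succ]
      push_cast
      split_ifs <;> simp
    intro j hj
    rcases Nat.lt_or_ge j (N+1) with hjN | hjN
    · have := ih j (by omega)
      have hnn : (0:ℝ) ≤ γ₂ - m := by linarith
      nlinarith
    · have hj' : j = N + 1 := by omega
      subst hj'
      by_cases hP : (N+1) ∈ plP a γ₂
      · have hstep : plS a γ₂ (N+1) = plS a γ₂ N + (a N - γ₂) :=
          Finset.sum_range_succ (fun i => a i - γ₂) N
        have hc'eq : c' = c + 1 := by
          rw [hc, hc', hcnt_succ, if_pos hP]; push_cast; ring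
        have hN := ih N le_rfl
        have hstepb : a N - γ₂ ≥ -(γ₂ - m) := by
          have := hm N; linarith
        rw [hstep, hc'eq]
        linarith
      · obtain ⟨j₀, hj₀lt, hj₀⟩ : ∃ j₀, j₀ < N + 1 ∧ plS a γ₂ j₀ < plS a γ₂ (N+1) := by
          by_contra hcon
          push_neg at hcon
          exact hP (fun j hj => hcon j hj)
        have hc'eq : c' = c := by
          rw [hc, hc', hcnt_succ, if_neg hP]; push_cast; ring
        have := ih j₀ (by omega)
        rw [hc'eq]
        linarith

/-- Pliss counting bound. -/
lemma pliss_count (hm : ∀ i, m ≤ a i) (hγ : m ≤ γ₂)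
    {N : ℕ} (hN : ∑ i ∈ Finset.range N, a i ≤ γ' * N) :
    (γ₂ - γ') * N ≤ (γ₂ - m) * ((((Finset.range N).filter (fun n => n ∈ plP a γ₂)).card : ℝ) + 1) := by
  rcases Nat.eq_zero_or_pos N with rfl | hNpos
  · simp
    nlinarith [Nat.cast_nonneg (α := ℝ) ((Finset.range 0).filter (fun n => n ∈ plP a γ₂)).card]
  · obtain ⟨M, rfl⟩ : ∃ M, N = M + 1 := ⟨N - 1, by omega⟩
    -- plS at M+1
    have hsN : plS a γ₂ (M+1) ≤ (γ' - γ₂) * ((M:ℝ)+1) := by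
      have he : plS a γ₂ (M+1) = (∑ i ∈ Finset.range (M+1), a i) - γ₂ * ((M:ℝ)+1) := by
        simp only [plS, Finset.sum_sub_distrib, Finset.sum_const, Finset.card_range,
          nsmul_eq_mul]
        push_cast; ring
      have hN' : ∑ i ∈ Finset.range (M + 1), a i ≤ γ' * ((M:ℝ)+1) := by
        push_cast at hN; linarith
      rw [he]
      nlinarith [hN']
    have h1 := pliss_induction hm hγ (M+1) (M+1) le_rfl
    have hcard : (((Finset.range (M+2)).filter (fun n => n ∈ plP a γ₂)).card : ℝ)
        ≤ (((Finset.range (M+1)).filter (fun n => n ∈ plP a γ₂)).card : ℝ) + 1 := by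
      have : ((Finset.range (M+2)).filter (fun n => n ∈ plP a γ₂)).card
          ≤ ((Finset.range (M+1)).filter (fun n => n ∈ plP a γ₂)).card + 1 := by
        rw [Finset.range_add_one, Finset.filter_insert]
        split_ifs with h
        · exact Finset.card_insert_le _ _
        · omega
      exact_mod_cast this
    have hnn : (0:ℝ) ≤ γ₂ - m := by linarith
    push_cast at h1 hsN ⊢
    nlinarith [h1, hsN, hcard]

end Pliss
section Density

lemma lowerDensity_mono {A B : Set ℕ} (h : A ⊆ B) : lowerDensity A ≤ lowerDensity B := by
  rw [lowerDensity, lowerDensity]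
  refine liminf_le_liminf (Eventually.of_forall (fun n => ?_)) ?_ ?_
  · rcases Nat.eq_zero_or_pos n with rfl | hn
    · simp
    · refine (div_le_div_iff_of_pos_right (by exact_mod_cast hn : (0:ℝ) < n)).mpr ?_
      exact_mod_cast Finset.card_le_card
        (Finset.monotone_filter_right _ (fun i _ (hi : i ∈ A) => h hi))
  · exact isBoundedUnder_of ⟨0, fun n => by positivity⟩
  · refine IsBoundedUnder.isCoboundedUnder_ge (isBoundedUnder_of ⟨1, fun n => ?_⟩)
    rcases Nat.eq_zero_or_pos n with rfl | hn
    · simp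
    · rw [div_le_one (by exact_mod_cast hn)]
      exact_mod_cast (Finset.card_filter_le _ _).trans (Finset.card_range n).le

lemma pliss_density {a : ℕ → ℝ} {m γ' γ₂ : ℝ} (hm : ∀ i, m ≤ a i) (hγ : m < γ₂)
    (hev : ∀ᶠ N in atTop, ∑ i ∈ Finset.range N, a i ≤ γ' * N) :
    (γ₂ - γ') / (γ₂ - m) ≤ lowerDensity (plP a γ₂) := by
  set ρ := (γ₂ - γ') / (γ₂ - m) with hρ
  have hpos : 0 < γ₂ - m := by linarith
  have hbound : ∀ᶠ N : ℕ in atTop, ρ - 1/(N:ℝ) ≤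
      (((Finset.range N).filter (fun i => i ∈ plP a γ₂)).card : ℝ) / N := by
    filter_upwards [hev, eventually_ge_atTop 1] with N hN hN1
    have hNpos : (0:ℝ) < N := by exact_mod_cast hN1
    have hcount := pliss_count hm hγ.le hN
    set c : ℝ := (((Finset.range N).filter (fun i => i ∈ plP a γ₂)).card : ℝ) with hc
    have h2 : ρ ≤ (c + 1) / N := by
      rw [le_div_iff₀ hNpos, hρ, div_mul_eq_mul_div, div_le_iff₀ hpos]
      nlinarith [hcount]
    have h3 : (c+1)/N - 1/N = c/N := by field_simp; ring
    linarith
  have t1 : Tendsto (fun N : ℕ => ρ - 1/(N:ℝ)) atTop (𝓝 ρ) := by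
    have : Tendsto (fun n : ℕ => 1/(n:ℝ)) atTop (𝓝 0) := tendsto_one_div_atTop_nhds_zero_nat
    simpa using tendsto_const_nhds.sub this
  rw [lowerDensity]
  calc ρ = liminf (fun N : ℕ => ρ - 1/(N:ℝ)) atTop := t1.liminf_eq.symm
  _ ≤ _ := by
      refine liminf_le_liminf hbound ?_ ?_
      · refine isBoundedUnder_of ⟨ρ - 1, fun N : ℕ => ?_⟩
        simp only [ge_iff_le]
        rcases Nat.eq_zero_or_pos N with rfl | hN
        · norm_num
        · have h1 : 1/(N:ℝ) ≤ 1 := by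
            rw [div_le_one (by exact_mod_cast hN)]
            exact_mod_cast hN
          linarith
      · refine IsBoundedUnder.isCoboundedUnder_ge (isBoundedUnder_of ⟨1, fun n : ℕ => ?_⟩)
        rcases Nat.eq_zero_or_pos n with rfl | hn
        · simp
        · rw [div_le_one (by exact_mod_cast hn)]
          exact_mod_cast (Finset.card_filter_le _ _).trans (Finset.card_range n).le

end Density

lemma abs_min_le_add (a b : ℝ) : |min a b| ≤ |a| + |b| := by
  rcases min_cases a b with ⟨h, -⟩ | ⟨h, -⟩ <;> rw [h]
  · linarith [abs_nonneg b]
  · linarith [abs_nonneg a]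

/-- Lemma 3.5 of the paper: for a sub-additive sequence of continuous functions with
a.e. asymptotic rate at most `γ₁ < γ₂`, for every `θ ∈ (0,1)` there is `ℓ₀` such that for
every `ℓ ≥ ℓ₀` the set of points whose set of `(φ_ℓ, γ₂)`-hyperbolic times for `f^ℓ` has
lower density at least `θ` has `μ`-measure greater than `θ`. -/
theorem stmt_2 {X : Type*} [MetricSpace X] [CompactSpace X]
    [MeasurableSpace X] [BorelSpace X]
    (f : X → X) (hf : Measurable f)
    (μ : Measure X) [IsProbabilityMeasure μ] (hinv : MeasurePreserving f μ μ)
    (φ : ℕ → X → ℝ) (hcont : ∀ n, Continuous (φ n))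
    (hsub : ∀ n m x, φ (n + m) x ≤ φ n x + φ m (f^[n] x))
    (γ₁ γ₂ : ℝ) (hγ : γ₁ < γ₂)
    (hlim : ∀ᵐ x ∂μ, limsup (fun n => φ n x / n) atTop ≤ γ₁)
    (θ : ℝ) (hθ : θ ∈ Set.Ioo (0:ℝ) 1) :
    ∃ ℓ₀ : ℕ, ∀ ℓ ≥ ℓ₀,
      θ < (μ {x | θ ≤ lowerDensity
        {n | ∀ k, 1 ≤ k → k ≤ n →
          (∑ i ∈ Finset.Ico (n - k) n, φ ℓ (f^[i * ℓ] x)) / (k * ℓ : ℝ) ≤ γ₂}}).toReal := by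
  obtain ⟨hθ0, hθ1⟩ := hθ
  haveI hXne : Nonempty X :=
    ⟨(nonempty_of_measure_ne_zero (by simp : μ Set.univ ≠ 0)).choose⟩
  obtain ⟨z, -, hzmax⟩ := isCompact_univ.exists_isMaxOn Set.univ_nonempty (hcont 1).continuousOn
  have hz : ∀ y, φ 1 y ≤ φ 1 z := fun y => hzmax (Set.mem_univ y)
  set M₁ := φ 1 z with hM₁
  -- constants
  obtain ⟨η, hηdef⟩ : ∃ η : ℝ, η = (γ₂ - γ₁) * (1 - θ) / 10 := ⟨_, rfl⟩
  have hηpos : 0 < η := by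
    rw [hηdef]
    have h1 : 0 < γ₂ - γ₁ := by linarith
    have h2 : 0 < 1 - θ := by linarith
    positivity
  obtain ⟨δ, hδdef⟩ : ∃ δ : ℝ, δ = η := ⟨_, rfl⟩
  have hδpos : 0 < δ := hδdef ▸ hηpos
  obtain ⟨m, hmdef⟩ : ∃ m : ℝ, m = γ₁ - η := ⟨_, rfl⟩
  obtain ⟨γ', hγ'def⟩ : ∃ γ' : ℝ, γ' = γ₁ + 2*δ := ⟨_, rfl⟩
  obtain ⟨ε, hεdef⟩ : ∃ ε : ℝ, ε = δ * (1 - θ) / 2 := ⟨_, rfl⟩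
  have hεpos : 0 < ε := by
    rw [hεdef, hδdef]
    have h2 : 0 < 1 - θ := by linarith
    positivity
  have hη5 : 5 * η ≤ γ₂ - γ₁ := by
    rw [hηdef]; nlinarith
  have hmγ₂ : m < γ₂ := by rw [hmdef]; linarith
  have hγ'γ₂ : γ' < γ₂ := by rw [hγ'def, hδdef]; linarith
  have hθρ : θ ≤ (γ₂ - γ') / (γ₂ - m) := by
    rw [le_div_iff₀ (by rw [hmdef]; linarith), hγ'def, hmdef, hδdef, hηdef]
    nlinarith [mul_pos (sub_pos.mpr hγ) (sub_pos.mpr hθ1), sq_nonneg (1 - θ),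
      mul_nonneg (mul_nonneg (sub_pos.mpr hγ).le (sub_pos.mpr hθ1).le) (sub_pos.mpr hθ1).le]
  -- the truncated subadditive sequence
  set ψ : ℕ → X → ℝ := fun n x => max (φ n x) (n * m) with hψdef
  have hψcont : ∀ n, Continuous (ψ n) := fun n => (hcont n).max continuous_const
  have hψmeas : ∀ n, Measurable (ψ n) := fun n => (hψcont n).measurable
  have hψsub : ∀ n k x, ψ (n + k) x ≤ ψ n x + ψ k (f^[n] x) := by
    intro n k x
    refine max_le (le_trans (hsub n k x)
      (add_le_add (le_max_left _ _) (le_max_left _ _))) ?_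
    have he : ((n + k : ℕ):ℝ) * m = (n:ℝ) * m + (k:ℝ) * m := by push_cast; ring
    rw [he]
    exact add_le_add (le_max_right _ _) (le_max_right _ _)
  have hψlb : ∀ (n : ℕ) (x : X), (n:ℝ) * m ≤ ψ n x := fun n x => le_max_right _ _
  have hφψ : ∀ (n : ℕ) (x : X), φ n x ≤ ψ n x := fun n x => le_max_left _ _
  -- upper bound for φ (n+1)
  have hφub : ∀ (n : ℕ) (x : X), φ (n+1) x ≤ ((n+1 : ℕ):ℝ) * M₁ := by
    intro n
    induction n with
    | zero => intro x; simpa using hz x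
    | succ n ih =>
      intro x
      have h1 := hsub (n+1) 1 x
      have h2 := ih x
      have h3 := hz (f^[n+1] x)
      push_cast at h2 ⊢
      calc φ (n+1+1) x ≤ φ (n+1) x + φ 1 (f^[n+1] x) := h1
      _ ≤ ((n:ℝ)+1) * M₁ + M₁ := add_le_add h2 h3
      _ = ((n:ℝ)+1+1) * M₁ := by ring
  set Mc : ℝ := max M₁ m with hMc
  have hψub : ∀ (n : ℕ) (x : X), ψ (n+1) x ≤ ((n+1 : ℕ):ℝ) * Mc := by
    intro n x
    have hn1 : (0:ℝ) ≤ ((n+1 : ℕ):ℝ) := by positivity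
    refine max_le ?_ ?_
    · exact le_trans (hφub n x) (mul_le_mul_of_nonneg_left (le_max_left _ _) hn1)
    · exact mul_le_mul_of_nonneg_left (le_max_right _ _) hn1
  set C : ℝ := |M₁| + |m| + |Mc| with hCdef
  have hC0 : 0 ≤ C := by rw [hCdef]; positivity
  have habsq : ∀ (N : ℕ) (x : X), |ψ N x / N| ≤ C := by
    intro N x
    rcases N with _ | n
    · simpa using hC0
    · have hNpos : (0:ℝ) < ((n+1 : ℕ):ℝ) := by positivity
      rw [abs_div, abs_of_pos hNpos, div_le_iff₀ hNpos, abs_le]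
      constructor
      · have h1 := hψlb (n+1) x
        have h2 : -|m| ≤ m := neg_abs_le m
        rw [hCdef]
        nlinarith [abs_nonneg M₁, abs_nonneg Mc]
      · have h1 := hψub n x
        have h2 : Mc ≤ |Mc| := le_abs_self Mc
        rw [hCdef]
        nlinarith [abs_nonneg M₁, abs_nonneg m]
  -- integrals
  have hψint : ∀ n, Integrable (ψ n) μ := by
    intro n
    obtain ⟨w, -, hwmax⟩ := isCompact_univ.exists_isMaxOn Set.univ_nonempty
      ((hψcont n).abs).continuousOn
    exact integrable_of_bdd (hψmeas n) (fun x => hwmax (Set.mem_univ x))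
  set u : ℕ → ℝ := fun n => ∫ x, ψ n x ∂μ with hudef
  have husub : Subadditive u := by
    intro n k
    have hcomp : Integrable (fun x => ψ k (f^[n] x)) μ := by
      obtain ⟨w, -, hwmax⟩ := isCompact_univ.exists_isMaxOn Set.univ_nonempty
        ((hψcont k).abs).continuousOn
      exact integrable_of_bdd ((hψmeas k).comp ((hinv.iterate n).measurable))
        (fun x => hwmax (Set.mem_univ (f^[n] x)))
    have h1 : ∫ x, ψ (n+k) x ∂μ ≤ ∫ x, (ψ n x + ψ k (f^[n] x)) ∂μ :=
      integral_mono (hψint _) ((hψint n).add hcomp) (fun x => hψsub n k x)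
    rwa [integral_add (hψint n) hcomp, integral_comp_eq (hinv.iterate n) (hψmeas k)] at h1
  have hbddB : BddBelow (Set.range fun n : ℕ => u n / n) := by
    refine ⟨min m 0, fun y hy => ?_⟩
    obtain ⟨n, rfl⟩ := hy
    rcases n with _ | n
    · simp
    · have hNpos : (0:ℝ) < ((n+1 : ℕ):ℝ) := by positivity
      have h1 : ((n+1:ℕ):ℝ) * m ≤ u (n+1) := by
        have h2 := integral_mono (integrable_const (((n+1:ℕ):ℝ) * m)) (hψint (n+1))
          (fun x => hψlb (n+1) x)
        simpa using h2
      have h3 : m ≤ u (n+1) / ((n+1:ℕ):ℝ) := by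
        rw [le_div_iff₀ hNpos]; linarith [mul_comm m (((n+1:ℕ):ℝ))]
      exact le_trans (min_le_left _ _) h3
  set c' : ℝ := husub.lim with hc'def
  have hfek : Tendsto (fun n => u n / n) atTop (𝓝 c') := husub.tendsto_lim hbddB
  have hc'le : ∀ n : ℕ, n ≠ 0 → c' ≤ u n / n := fun n hn => husub.lim_le_div hbddB hn
  -- W n
  set W : ℕ → ℝ := fun n => ∫ x, max (ψ n x / n - γ₁) 0 ∂μ with hWdef
  have hWm : ∀ n : ℕ, Measurable (fun x => max (ψ n x / n - γ₁) 0) :=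
    fun n => (((hψmeas n).div_const _).sub measurable_const).max measurable_const
  have hWb : ∀ (n : ℕ) (x : X), |max (ψ n x / n - γ₁) 0| ≤ C + |γ₁| := by
    intro n x
    rcases le_or_gt (ψ n x / n - γ₁) 0 with h | h
    · rw [max_eq_right h]
      simp only [abs_zero]
      positivity
    · rw [max_eq_left h.le, abs_of_pos h]
      have h1 := (abs_le.mp (habsq n x)).2
      have h2 : -|γ₁| ≤ γ₁ := neg_abs_le γ₁
      linarith
  have hWto : Tendsto W atTop (𝓝 0) := by
    have key : Tendsto W atTop (𝓝 (∫ (_ : X), (0:ℝ) ∂μ)) := by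
      refine tendsto_integral_of_dominated_convergence (fun _ => C + |γ₁|)
        (fun n => (hWm n).aestronglyMeasurable) (integrable_const _)
        (fun n => ae_of_all _ (fun x => hWb n x)) ?_
      filter_upwards [hlim] with x hx
      rw [NormedAddCommGroup.tendsto_nhds_zero]
      intro e he
      have hbdd1 : IsBoundedUnder (· ≤ ·) atTop (fun n : ℕ => φ n x / n) := by
        refine isBoundedUnder_of ⟨max M₁ 0, fun n => ?_⟩
        rcases n with _ | n
        · simp
        · have hNpos : (0:ℝ) < ((n+1 : ℕ):ℝ) := by positivity
          rw [div_le_iff₀ hNpos]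
          exact le_trans (le_trans (hφub n x)
            (mul_le_mul_of_nonneg_left (le_max_left _ _) hNpos.le))
            (le_of_eq (mul_comm _ _))
      have hev := eventually_lt_of_limsup_lt (lt_of_le_of_lt hx
        (lt_add_of_pos_right γ₁ he)) hbdd1
      filter_upwards [hev, eventually_ge_atTop 1] with n hn hn1
      have hNpos : (0:ℝ) < (n:ℝ) := by exact_mod_cast hn1
      have hψn : ψ n x / n < γ₁ + e := by
        rw [div_lt_iff₀ hNpos]
        refine max_lt ?_ ?_
        · rw [← div_lt_iff₀ hNpos]; exact hn
        · have hme : m < γ₁ + e := by rw [hmdef]; linarith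
          calc (n:ℝ) * m < (n:ℝ) * (γ₁ + e) := by
                exact mul_lt_mul_of_pos_left hme hNpos
          _ = (γ₁ + e) * n := mul_comm _ _
      rw [Real.norm_eq_abs, abs_of_nonneg (le_max_right _ _)]
      exact max_lt (by linarith) he
    simpa using key
  -- choice of ℓ₀
  obtain ⟨ℓ₀', hℓ₀'⟩ := eventually_atTop.mp
    (hfek.eventually_lt_const (lt_add_of_pos_right c' hεpos))
  refine ⟨max ℓ₀' 1, fun ℓ hℓ => ?_⟩
  have hℓ1 : 1 ≤ ℓ := le_trans (le_max_right _ _) hℓ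
  have hℓpos : (0:ℝ) < (ℓ:ℝ) := by exact_mod_cast hℓ1
  set T : X → X := f^[ℓ] with hTdef
  have hT : MeasurePreserving T μ μ := hinv.iterate ℓ
  set g : X → ℝ := fun x => ψ ℓ x / ℓ with hgdef
  have hgmeas : Measurable g := (hψmeas ℓ).div_const _
  have hgbd : ∀ x, |g x| ≤ C := fun x => habsq ℓ x
  set G : X → ℝ := fun x => limsup (fun k => birkhoffSum T g k x / k) atTop with hGdef
  have hGmeas : Measurable G := Measurable.limsup
    (fun k => (birkhoffSum_measurable hT.measurable hgmeas k).div_const _)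
  have hGbd : ∀ x, |G x| ≤ C := by
    intro x
    rw [abs_le]
    constructor
    · refine le_limsup_of_frequently_le
        (Frequently.of_forall (fun k => (abs_le.mp (abs_avg_le hC0 hgbd k x)).1)) ?_
      exact isBoundedUnder_of ⟨C, fun k => (abs_le.mp (abs_avg_le hC0 hgbd k x)).2⟩
    · refine limsup_le_of_le (IsBoundedUnder.isCoboundedUnder_le
        (isBoundedUnder_of ⟨-C, fun k => (abs_le.mp (abs_avg_le hC0 hgbd k x)).1⟩)) ?_
      exact Eventually.of_forall (fun k => (abs_le.mp (abs_avg_le hC0 hgbd k x)).2)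
  have hGint : Integrable G μ := integrable_of_bdd hGmeas hGbd
  have hintG : ∫ x, G x ∂μ = u ℓ / ℓ := by
    rw [hGdef, integral_limsup_avg hT hgmeas hC0 hgbd, hgdef]
    exact integral_div _ _
  set A : Set X := {x | γ₁ + δ < G x} with hAdef
  have hAmeas : MeasurableSet A := measurableSet_lt measurable_const hGmeas
  have hbirk := birkhoff_ae hT hgmeas hC0 hgbd
  -- iterated subadditivity along T
  have hiter : ∀ (j : ℕ) (y : X), ψ ((j+1)*ℓ) y ≤ birkhoffSum T (ψ ℓ) (j+1) y := by
    intro j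
    induction j with
    | zero => intro y; simp [birkhoffSum_one]
    | succ j ih =>
      intro y
      have h1 : (j+1+1)*ℓ = (j+1)*ℓ + ℓ := by ring
      have h2 := hψsub ((j+1)*ℓ) ℓ y
      have h3 : f^[(j+1)*ℓ] y = T^[j+1] y := by
        rw [hTdef, ← Function.iterate_mul, Nat.mul_comm]
      rw [h1, birkhoffSum_succ]
      calc ψ ((j+1)*ℓ + ℓ) y ≤ ψ ((j+1)*ℓ) y + ψ ℓ (f^[(j+1)*ℓ] y) := h2
      _ ≤ birkhoffSum T (ψ ℓ) (j+1) y + ψ ℓ (T^[j+1] y) := by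
          rw [h3]; exact add_le_add (ih y) le_rfl
  -- measure estimate for A
  have hAest : δ * (μ A).toReal ≤ ε := by
    have hstep : ∀ k : ℕ, 1 ≤ k → c' - W (k*ℓ) - γ₁ * (μ A).toReal
        ≤ ∫ x in Aᶜ, min (birkhoffSum T g k x / k) γ₁ ∂μ := by
      intro k hk
      have hkℓ1 : k * ℓ ≠ 0 := by positivity
      have hkℓpos : (0:ℝ) < ((k*ℓ : ℕ):ℝ) := by
        have : 0 < k * ℓ := Nat.pos_of_ne_zero hkℓ1
        exact_mod_cast this
      set q : X → ℝ := fun x => ψ (k*ℓ) x / ((k*ℓ : ℕ):ℝ) with hqdef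
      have hqmeas : Measurable q := (hψmeas _).div_const _
      have hqbd : ∀ x, |q x| ≤ C := fun x => habsq (k*ℓ) x
      set v : X → ℝ := fun x => min (q x) γ₁ with hvdef
      have hvmeas : Measurable v := hqmeas.min measurable_const
      have hvbd : ∀ x, |v x| ≤ C + |γ₁| :=
        fun x => le_trans (abs_min_le_add _ _) (add_le_add (hqbd x) le_rfl)
      have hvint : Integrable v μ := integrable_of_bdd hvmeas hvbd
      -- q ≤ Birkhoff average
      have hqle : ∀ x, q x ≤ birkhoffSum T g k x / k := by
        intro x
        obtain ⟨j, rfl⟩ : ∃ j, k = j + 1 := ⟨k - 1, by omega⟩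
        have h1 := hiter j x
        have h2 : birkhoffSum T g (j+1) x = birkhoffSum T (ψ ℓ) (j+1) x / ℓ := by
          rw [hgdef]
          simp only [birkhoffSum]
          rw [← Finset.sum_div]
        rw [hqdef, h2, div_div]
        have hcast : (((j+1)*ℓ : ℕ):ℝ) = (ℓ:ℝ) * ((j+1 : ℕ):ℝ) := by push_cast; ring
        rw [hcast]
        have hpos : (0:ℝ) < (ℓ:ℝ) * ((j+1 : ℕ):ℝ) := by positivity
        exact (div_le_div_iff_of_pos_right hpos).mpr h1
      have hvle : ∀ x, v x ≤ min (birkhoffSum T g k x / k) γ₁ :=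
        fun x => min_le_min (hqle x) le_rfl
      -- ∫ v  =  u(kℓ)/(kℓ) - W(kℓ)
      have hvq : ∀ x, v x = q x - max (q x - γ₁) 0 := by
        intro x
        rcases le_total (q x) γ₁ with h | h
        · rw [hvdef]
          simp only [min_eq_left h, max_eq_right (by linarith : q x - γ₁ ≤ 0)]
          ring
        · rw [hvdef]
          simp only [min_eq_right h, max_eq_left (by linarith : (0:ℝ) ≤ q x - γ₁)]
          ring
      have hqint : Integrable q μ := integrable_of_bdd hqmeas hqbd
      have hmaxint : Integrable (fun x => max (q x - γ₁) 0) μ :=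
        integrable_of_bdd ((hqmeas.sub measurable_const).max measurable_const)
          (fun x => hWb (k*ℓ) x)
      have hintv : ∫ x, v x ∂μ = u (k*ℓ) / ((k*ℓ:ℕ):ℝ) - W (k*ℓ) := by
        rw [integral_congr_ae (ae_of_all _ hvq), integral_sub hqint hmaxint]
        congr 1
        rw [hqdef]
        exact integral_div _ _
      have hc'q : c' - W (k*ℓ) ≤ ∫ x, v x ∂μ := by
        rw [hintv]
        have := hc'le (k*ℓ) hkℓ1
        linarith
      -- ∫_A v ≤ γ₁ μA
      have hAv : ∫ x in A, v x ∂μ ≤ γ₁ * (μ A).toReal := by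
        have h1 : ∫ x in A, v x ∂μ ≤ ∫ x in A, γ₁ ∂μ :=
          setIntegral_mono_on hvint.integrableOn
            (integrableOn_const (measure_ne_top μ A)) hAmeas
            (fun x _ => min_le_right _ _)
        rwa [setIntegral_const, smul_eq_mul, mul_comm] at h1
      have hsplit : ∫ x in Aᶜ, v x ∂μ = ∫ x, v x ∂μ - ∫ x in A, v x ∂μ := by
        rw [← integral_add_compl hAmeas hvint]
        ring
      have hfinal1 : c' - W (k*ℓ) - γ₁ * (μ A).toReal ≤ ∫ x in Aᶜ, v x ∂μ := by
        rw [hsplit]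
        linarith
      have hfinal2 : ∫ x in Aᶜ, v x ∂μ
          ≤ ∫ x in Aᶜ, min (birkhoffSum T g k x / k) γ₁ ∂μ := by
        refine setIntegral_mono_on hvint.integrableOn ?_ hAmeas.compl (fun x _ => hvle x)
        refine (integrable_of_bdd (C := C + |γ₁|) ?_ ?_).integrableOn
        · exact ((birkhoffSum_measurable hT.measurable hgmeas k).div_const _).min
            measurable_const
        · exact fun x => le_trans (abs_min_le_add _ _)
            (add_le_add (abs_avg_le hC0 hgbd k x) le_rfl)
      linarith
    have hklto : Tendsto (fun k : ℕ => k * ℓ) atTop atTop :=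
      tendsto_atTop_atTop.mpr (fun b =>
        ⟨b, fun a ha => le_trans ha (Nat.le_mul_of_pos_right a (by omega))⟩)
    have hlim3 : Tendsto (fun k : ℕ => c' - W (k*ℓ) - γ₁ * (μ A).toReal) atTop
        (𝓝 (c' - γ₁ * (μ A).toReal)) := by
      have h1 : Tendsto (fun k : ℕ => W (k*ℓ)) atTop (𝓝 0) := hWto.comp hklto
      have h2 := ((tendsto_const_nhds (x := c') (f := atTop)).sub h1).sub
        (tendsto_const_nhds (x := γ₁ * (μ A).toReal))
      simpa using h2
    have hlim2 : Tendsto (fun k : ℕ => ∫ x in Aᶜ, min (birkhoffSum T g k x / k) γ₁ ∂μ)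
        atTop (𝓝 (∫ x in Aᶜ, min (G x) γ₁ ∂μ)) := by
      refine tendsto_integral_of_dominated_convergence (fun _ => C + |γ₁|)
        (fun k => (((birkhoffSum_measurable hT.measurable hgmeas k).div_const _).min
          measurable_const).aestronglyMeasurable) (integrable_const _)
        (fun k => ae_of_all _ (fun x => le_trans (abs_min_le_add _ _)
          (add_le_add (abs_avg_le hC0 hgbd k x) le_rfl))) ?_
      refine ae_restrict_of_ae ?_
      filter_upwards [hbirk] with x hx
      exact hx.min tendsto_const_nhds
    have h5 : c' - γ₁ * (μ A).toReal ≤ ∫ x in Aᶜ, min (G x) γ₁ ∂μ :=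
      le_of_tendsto_of_tendsto hlim3 hlim2 (eventually_atTop.mpr ⟨1, hstep⟩)
    have h6 : ∫ x in Aᶜ, min (G x) γ₁ ∂μ ≤ ∫ x in Aᶜ, G x ∂μ := by
      refine setIntegral_mono_on ?_ hGint.integrableOn hAmeas.compl
        (fun x _ => min_le_left _ _)
      exact (integrable_of_bdd (hGmeas.min measurable_const)
        (fun x => le_trans (abs_min_le_add _ _) (add_le_add (hGbd x) le_rfl))).integrableOn
    have h7 : (γ₁ + δ) * (μ A).toReal ≤ ∫ x in A, G x ∂μ := by
      have := setIntegral_ge_of_const_le hAmeas (measure_ne_top μ A)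
        (fun x hx => le_of_lt hx) hGint.integrableOn
      rwa [smul_eq_mul, mul_comm] at this
    have h8 : ∫ x in A, G x ∂μ + ∫ x in Aᶜ, G x ∂μ = ∫ x, G x ∂μ :=
      integral_add_compl hAmeas hGint
    have h9 : ∫ x, G x ∂μ ≤ c' + ε := by
      rw [hintG]
      exact (hℓ₀' ℓ (le_trans (le_max_left _ _) hℓ)).le
    linarith
  -- measure of A is small
  have hμA : (μ A).toReal ≤ (1 - θ)/2 := by
    have h1 : (μ A).toReal ≤ ε / δ := by
      rw [le_div_iff₀ hδpos]
      linarith [mul_comm δ ((μ A).toReal)]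
    have h2 : ε / δ = (1-θ)/2 := by
      rw [hεdef]
      field_simp
    linarith
  have hμAc : θ < (μ Aᶜ).toReal := by
    have h1 : (μ Aᶜ).toReal = 1 - (μ A).toReal := by
      rw [measure_compl hAmeas (measure_ne_top μ A), measure_univ,
        ENNReal.toReal_sub_of_le prob_le_one ENNReal.one_ne_top, ENNReal.toReal_one]
    rw [h1]
    linarith
  -- final inclusion
  set Econv : Set X := {x | Tendsto (fun k => birkhoffSum T g k x / k) atTop (𝓝 (G x))}
    with hEdef
  have hEc : μ Econvᶜ = 0 := by
    have h2 : ∀ᵐ x ∂μ, x ∈ Econv := hbirk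
    rw [ae_iff] at h2
    simpa [hEdef, Set.compl_setOf] using h2
  have hkey : Aᶜ ∩ Econv ⊆ {x | θ ≤ lowerDensity
      {n | ∀ k, 1 ≤ k → k ≤ n →
        (∑ i ∈ Finset.Ico (n - k) n, φ ℓ (f^[i * ℓ] x)) / (k * ℓ : ℝ) ≤ γ₂}} := by
    rintro x ⟨hxA, hxE⟩
    have hGx : G x ≤ γ₁ + δ := not_lt.mp hxA
    have htd : Tendsto (fun k => birkhoffSum T g k x / k) atTop (𝓝 (G x)) := hxE
    set a : ℕ → ℝ := fun i => g (T^[i] x) with hadef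
    have hma : ∀ i, m ≤ a i := by
      intro i
      rw [hadef, hgdef]
      simp only []
      rw [le_div_iff₀ hℓpos]
      calc m * (ℓ:ℝ) = (ℓ:ℝ) * m := mul_comm _ _
      _ ≤ ψ ℓ (T^[i] x) := hψlb ℓ _
    have hevx : ∀ᶠ N : ℕ in atTop, ∑ i ∈ Finset.range N, a i ≤ γ' * N := by
      have h1 : G x < γ' := by rw [hγ'def]; linarith
      filter_upwards [htd.eventually_lt_const h1, eventually_ge_atTop 1] with N h2 h3
      have hNpos : (0:ℝ) < (N:ℝ) := by exact_mod_cast h3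
      have h4 : birkhoffSum T g N x ≤ γ' * N := by
        have := (div_le_iff₀ hNpos).mp h2.le
        linarith [mul_comm γ' ((N:ℝ))]
      exact h4
    have hplb := pliss_density hma hmγ₂ hevx
    have hsubs : plP a γ₂ ⊆ {n | ∀ k, 1 ≤ k → k ≤ n →
        (∑ i ∈ Finset.Ico (n - k) n, φ ℓ (f^[i * ℓ] x)) / (k * ℓ : ℝ) ≤ γ₂} := by
      intro n hn k hk1 hkn
      have hj := hn (n - k) (by omega)
      have hplS : ∀ (N : ℕ), plS a γ₂ N = ∑ i ∈ Finset.range N, a i - γ₂ * N := by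
        intro N
        simp only [plS, Finset.sum_sub_distrib, Finset.sum_const, Finset.card_range,
          nsmul_eq_mul]
        ring
      rw [hplS, hplS] at hj
      have hcast : ((n - k : ℕ):ℝ) = (n:ℝ) - (k:ℝ) := by
        rw [Nat.cast_sub hkn]
      have hIco : ∑ i ∈ Finset.Ico (n-k) n, a i
          = ∑ i ∈ Finset.range n, a i - ∑ i ∈ Finset.range (n-k), a i :=
        Finset.sum_Ico_eq_sub _ (by omega)
      have hIco2 : ∑ i ∈ Finset.Ico (n-k) n, a i ≤ γ₂ * k := by
        rw [hIco]
        rw [hcast] at hj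
        linarith
      have hkpos : (0:ℝ) < (k:ℝ) := by exact_mod_cast hk1
      have hkℓpos : (0:ℝ) < (k:ℝ) * (ℓ:ℝ) := by positivity
      rw [div_le_iff₀ hkℓpos]
      have hterm : ∀ i, φ ℓ (f^[i * ℓ] x) ≤ (ℓ:ℝ) * a i := by
        intro i
        have h1 : f^[i * ℓ] x = T^[i] x := by
          rw [hTdef, ← Function.iterate_mul, Nat.mul_comm]
        rw [h1, hadef, hgdef]
        simp only []
        have h2 : (ℓ:ℝ) * (ψ ℓ (T^[i] x) / ℓ) = ψ ℓ (T^[i] x) := by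
          field_simp
        rw [h2]
        exact hφψ ℓ _
      calc ∑ i ∈ Finset.Ico (n-k) n, φ ℓ (f^[i * ℓ] x)
          ≤ ∑ i ∈ Finset.Ico (n-k) n, (ℓ:ℝ) * a i :=
            Finset.sum_le_sum (fun i _ => hterm i)
      _ = (ℓ:ℝ) * ∑ i ∈ Finset.Ico (n-k) n, a i := by rw [Finset.mul_sum]
      _ ≤ (ℓ:ℝ) * (γ₂ * k) := mul_le_mul_of_nonneg_left hIco2 hℓpos.le
      _ = γ₂ * ((k:ℝ) * (ℓ:ℝ)) := by ring
    exact le_trans (le_trans hθρ hplb) (lowerDensity_mono hsubs)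
  have hinter : μ (Aᶜ ∩ Econv) = μ Aᶜ := measure_inter_conull hEc
  calc θ < (μ Aᶜ).toReal := hμAc
  _ = (μ (Aᶜ ∩ Econv)).toReal := by rw [hinter]
  _ ≤ _ := ENNReal.toReal_mono (measure_ne_top μ _) (measure_mono hkey)
end

section
/- Let f : X → X be a measurable map preserving a Borel probability measure μ on a compact metric space X, and let (φ_n) be a sub-additive sequence of continuous functions such that lim_{n→∞} φ_n(x)/n ≤ γ_1 for μ-a.e. x, where γ_1 < γ_2. Define H_ℓ(Φ, γ_2) = { x : (1/(nℓ))·Σ_{i=0}^{n−1} φ_ℓ(f^{iℓ} x) ≤ γ_2 for all n ∈ ℕ }. Then μ(H_ℓ(Φ, γ_2)) → 1 as ℓ → ∞. -/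
open MeasureTheory Filter Topology

section Hopf
variable {X : Type*} [MeasurableSpace X]

/-- auxiliary running maximum of Birkhoff sums -/
noncomputable def birkMax (T : X → X) (g : X → ℝ) : ℕ → X → ℝ
  | 0, _ => 0
  | (N+1), x => max (birkMax T g N x) (∑ i ∈ Finset.range (N+1), g (T^[i] x))

lemma birkMax_nonneg (T : X → X) (g : X → ℝ) (N : ℕ) (x : X) : 0 ≤ birkMax T g N x := by
  induction N with
  | zero => simp [birkMax]
  | succ N ih => exact le_trans ih (le_max_left _ _)

lemma birkMax_mono (T : X → X) (g : X → ℝ) {N M : ℕ} (h : N ≤ M) (x : X) :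
    birkMax T g N x ≤ birkMax T g M x := by
  induction M with
  | zero => simp_all
  | succ M ih =>
    rcases Nat.lt_or_ge N (M+1) with h' | h'
    · exact le_trans (ih (Nat.lt_succ_iff.mp h')) (le_max_left _ _)
    · have : N = M + 1 := le_antisymm h h'
      subst this; rfl

lemma sum_le_birkMax (T : X → X) (g : X → ℝ) {n N : ℕ} (h : n ≤ N) (hn : 1 ≤ n) (x : X) :
    ∑ i ∈ Finset.range n, g (T^[i] x) ≤ birkMax T g N x := by
  obtain ⟨m, rfl⟩ : ∃ m, n = m + 1 := ⟨n - 1, by omega⟩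
  have h1 : ∑ i ∈ Finset.range (m+1), g (T^[i] x) ≤ birkMax T g (m+1) x := by
    rw [birkMax]; exact le_max_right _ _
  exact h1.trans (birkMax_mono T g h x)

lemma birkMax_eq_sum_of_pos (T : X → X) (g : X → ℝ) {N : ℕ} {x : X}
    (h : 0 < birkMax T g N x) :
    ∃ n, 1 ≤ n ∧ n ≤ N ∧ birkMax T g N x = ∑ i ∈ Finset.range n, g (T^[i] x) := by
  induction N with
  | zero => simp [birkMax] at h
  | succ N ih =>
    rw [birkMax] at h ⊢
    rcases le_or_gt (∑ i ∈ Finset.range (N+1), g (T^[i] x)) (birkMax T g N x) with h' | h'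
    · rw [max_eq_left h'] at h ⊢
      obtain ⟨n, h1, h2, h3⟩ := ih h
      exact ⟨n, h1, h2.trans (Nat.le_succ N), h3⟩
    · exact ⟨N+1, Nat.succ_le_succ (Nat.zero_le N), le_refl _, max_eq_right h'.le⟩

lemma measurable_birkMax {T : X → X} (hT : Measurable T) {g : X → ℝ} (hg : Measurable g)
    (N : ℕ) : Measurable (birkMax T g N) := by
  induction N with
  | zero => simpa [birkMax] using measurable_const
  | succ N ih =>
    exact ih.max (Finset.measurable_sum _ fun i _ => hg.comp (hT.iterate i))

lemma birkMax_le_bound (T : X → X) {g : X → ℝ} {C : ℝ} (hC : ∀ x, |g x| ≤ C) (N : ℕ)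
    (x : X) : birkMax T g N x ≤ N * |C| := by
  induction N with
  | zero => simp [birkMax]
  | succ N ih =>
    rw [birkMax]
    refine max_le (ih.trans (by push_cast; nlinarith [abs_nonneg C])) ?_
    calc ∑ i ∈ Finset.range (N+1), g (T^[i] x)
        ≤ ∑ i ∈ Finset.range (N+1), |C| := by
          refine Finset.sum_le_sum fun i _ => ?_
          exact le_trans (le_abs_self _) ((hC _).trans (le_abs_self C))
      _ = ((N+1 : ℕ) : ℝ) * |C| := by simp

/-- Hopf's maximal ergodic theorem for bounded measurable functions on a probability space. -/
lemma hopf_maximal (μ : Measure X) [IsProbabilityMeasure μ]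
    {T : X → X} (hT : Measurable T) (hinv : MeasurePreserving T μ μ)
    {g : X → ℝ} (hg : Measurable g) {C : ℝ} (hC : ∀ x, |g x| ≤ C) :
    0 ≤ ∫ x in {x | ∃ n, 1 ≤ n ∧ 0 < ∑ i ∈ Finset.range n, g (T^[i] x)}, g x ∂μ := by
  -- integrability facts
  have hgint : Integrable g μ := by
    refine (integrable_const C).mono' hg.aestronglyMeasurable ?_
    exact Filter.Eventually.of_forall fun x => by rw [Real.norm_eq_abs]; exact hC x
  have hMmeas : ∀ N, Measurable (birkMax T g N) := measurable_birkMax hT hg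
  have hMint : ∀ N, Integrable (birkMax T g N) μ := by
    intro N
    refine (integrable_const ((N:ℝ) * |C|)).mono' (hMmeas N).aestronglyMeasurable ?_
    refine Filter.Eventually.of_forall fun x => ?_
    rw [Real.norm_eq_abs, abs_of_nonneg (birkMax_nonneg T g N x)]
    exact birkMax_le_bound T hC N x
  have hMTint : ∀ N, Integrable (fun x => birkMax T g N (T x)) μ := by
    intro N
    refine (integrable_const ((N:ℝ) * |C|)).mono' ((hMmeas N).comp hT).aestronglyMeasurable ?_
    refine Filter.Eventually.of_forall fun x => ?_
    rw [Real.norm_eq_abs, abs_of_nonneg (birkMax_nonneg T g N (T x))]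
    exact birkMax_le_bound T hC N (T x)
  -- the exhausting sets
  set A : ℕ → Set X := fun N => {x | 0 < birkMax T g N x} with hA
  have hAmeas : ∀ N, MeasurableSet (A N) := fun N =>
    measurableSet_lt measurable_const (hMmeas N)
  -- ∫ M N ∘ T = ∫ M N
  have hint_eq : ∀ N, ∫ x, birkMax T g N (T x) ∂μ = ∫ x, birkMax T g N x ∂μ := by
    intro N
    rw [← integral_map hT.aemeasurable (hMmeas N).aestronglyMeasurable, hinv.map_eq]
  -- key inequality on A N
  have hkey : ∀ N, ∀ x ∈ A N, birkMax T g N x - birkMax T g N (T x) ≤ g x := by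
    intro N x hx
    obtain ⟨n, hn1, hnN, heq⟩ := birkMax_eq_sum_of_pos T g hx
    have hsplit : ∑ i ∈ Finset.range n, g (T^[i] x)
        = g x + ∑ i ∈ Finset.range (n-1), g (T^[i] (T x)) := by
      obtain ⟨m, rfl⟩ : ∃ m, n = m + 1 := ⟨n - 1, by omega⟩
      rw [Finset.sum_range_succ']
      simp [Function.iterate_succ_apply, add_comm]
    rcases Nat.eq_or_lt_of_le hn1 with h1 | h1
    · -- n = 1 : birkMax T g N x = g x, and birkMax T g N (T x) ≥ 0
      have : birkMax T g N x = g x := by rw [heq, ← h1]; simp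
      have := birkMax_nonneg T g N (T x)
      linarith
    · have hle : ∑ i ∈ Finset.range (n-1), g (T^[i] (T x)) ≤ birkMax T g N (T x) :=
        sum_le_birkMax T g (by omega) (by omega) (T x)
      rw [heq, hsplit]
      linarith
  -- off A N the difference is ≤ 0
  have hoff : ∀ N, ∀ x ∉ A N, birkMax T g N x - birkMax T g N (T x) ≤ 0 := by
    intro N x hx
    have h0 : birkMax T g N x = 0 :=
      le_antisymm (not_lt.mp hx) (birkMax_nonneg T g N x)
    have := birkMax_nonneg T g N (T x)
    linarith
  -- ∫_{A N} g ≥ 0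
  have hAN : ∀ N, 0 ≤ ∫ x in A N, g x ∂μ := by
    intro N
    have hdint : Integrable (fun x => birkMax T g N x - birkMax T g N (T x)) μ := (hMint N).sub (hMTint N)
    have h1 : ∫ x, (birkMax T g N x - birkMax T g N (T x)) ∂μ = 0 := by
      rw [integral_sub (hMint N) (hMTint N), hint_eq N, sub_self]
    have h2 : ∫ x, (birkMax T g N x - birkMax T g N (T x)) ∂μ
        = (∫ x in A N, (birkMax T g N x - birkMax T g N (T x)) ∂μ) + ∫ x in (A N)ᶜ, (birkMax T g N x - birkMax T g N (T x)) ∂μ :=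
      (integral_add_compl (hAmeas N) hdint).symm
    have h3 : ∫ x in (A N)ᶜ, (birkMax T g N x - birkMax T g N (T x)) ∂μ ≤ 0 := by
      refine setIntegral_nonpos (hAmeas N).compl fun x hx => hoff N x hx
    have h4 : ∫ x in A N, (birkMax T g N x - birkMax T g N (T x)) ∂μ ≤ ∫ x in A N, g x ∂μ := by
      refine setIntegral_mono_on hdint.integrableOn hgint.integrableOn (hAmeas N)
        fun x hx => hkey N x hx
    linarith
  -- the union of the A N is the target set
  have hunion : (⋃ N, A N) = {x | ∃ n, 1 ≤ n ∧ 0 < ∑ i ∈ Finset.range n, g (T^[i] x)} := by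
    ext x
    simp only [Set.mem_iUnion, Set.mem_setOf_eq, hA]
    constructor
    · rintro ⟨N, hN⟩
      obtain ⟨n, hn1, hnN, heq⟩ := birkMax_eq_sum_of_pos T g hN
      exact ⟨n, hn1, heq ▸ hN⟩
    · rintro ⟨n, hn1, hpos⟩
      exact ⟨n, lt_of_lt_of_le hpos (sum_le_birkMax T g le_rfl hn1 x)⟩
  have hmono : Monotone A := by
    intro N M' h x hx
    exact lt_of_lt_of_le hx (birkMax_mono T g h x)
  have htend : Tendsto (fun N => ∫ x in A N, g x ∂μ) atTop
      (𝓝 (∫ x in ⋃ N, A N, g x ∂μ)) :=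
    tendsto_setIntegral_of_monotone hAmeas hmono hgint.integrableOn
  have := ge_of_tendsto' htend hAN
  rw [hunion] at this
  exact this

end Hopf

/-- Lemma 3.7 of the paper: for a sub-additive sequence of continuous functions with a.e.
asymptotic rate at most `γ₁ < γ₂`, the measure of the block
`H_ℓ(Φ, γ₂) = {x : (1/(nℓ)) ∑_{i<n} φ_ℓ(f^{iℓ} x) ≤ γ₂, ∀ n ≥ 1}` tends to `1` as `ℓ → ∞`. -/
theorem stmt_3 {X : Type*} [MetricSpace X] [CompactSpace X]
    [MeasurableSpace X] [BorelSpace X]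
    (f : X → X) (hf : Measurable f)
    (μ : Measure X) [IsProbabilityMeasure μ] (hinv : MeasurePreserving f μ μ)
    (φ : ℕ → X → ℝ) (hcont : ∀ n, Continuous (φ n))
    (hsub : ∀ n m x, φ (n + m) x ≤ φ n x + φ m (f^[n] x))
    (γ₁ γ₂ : ℝ) (hγ : γ₁ < γ₂)
    (hlim : ∀ᵐ x ∂μ, limsup (fun n => φ n x / n) atTop ≤ γ₁) :
    Tendsto (fun ℓ : ℕ => μ {x | ∀ n : ℕ, 1 ≤ n →
        (∑ i ∈ Finset.range n, φ ℓ (f^[i * ℓ] x)) / (n * ℓ : ℝ) ≤ γ₂})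
      atTop (𝓝 1) := by
  -- constants
  set γ' : ℝ := (γ₁ + γ₂) / 2 with hγ'def
  have hγ'₁ : γ₁ < γ' := by rw [hγ'def]; linarith
  have hγ'₂ : γ' < γ₂ := by rw [hγ'def]; linarith
  set c : ℝ := γ₂ - γ' with hcdef
  have hc0 : 0 < c := by rw [hcdef]; linarith
  -- boundedness of continuous functions
  have hbd : ∀ ψ : X → ℝ, Continuous ψ → ∃ C, ∀ x, |ψ x| ≤ C := by
    intro ψ hψ
    obtain ⟨C, hC⟩ := isCompact_univ.exists_bound_of_continuousOn hψ.continuousOn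
    exact ⟨C, fun x => hC x (Set.mem_univ x)⟩
  have hintg : ∀ (ψ : X → ℝ) (C : ℝ), Measurable ψ → (∀ x, |ψ x| ≤ C) → Integrable ψ μ := by
    intro ψ C h1 h2
    exact (integrable_const C).mono' h1.aestronglyMeasurable
      (Filter.Eventually.of_forall fun x => by rw [Real.norm_eq_abs]; exact h2 x)
  obtain ⟨C₁, hC₁⟩ := hbd (φ 1) (hcont 1)
  -- linear growth
  have hgrow : ∀ m : ℕ, ∀ x, φ (m + 1) x ≤ (m + 1 : ℝ) * C₁ := by
    intro m
    induction m with
    | zero => intro x; simpa using (abs_le.mp (hC₁ x)).2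
    | succ m ih =>
      intro x
      have h1 := hsub (m + 1) 1 x
      have h2 := (abs_le.mp (hC₁ (f^[m+1] x))).2
      have h3 := ih x
      push_cast
      push_cast at h3
      linarith
  -- the integrals I ℓ
  set F : ℕ → X → ℝ := fun ℓ x => max (φ ℓ x / ℓ - γ') 0 with hFdef
  set I : ℕ → ℝ := fun ℓ => ∫ x, F ℓ x ∂μ with hIdef
  have hFcont : ∀ ℓ, Continuous (F ℓ) := fun ℓ =>
    (((hcont ℓ).div_const _).sub continuous_const).max continuous_const
  have hFbound : ∀ ℓ x, ‖F ℓ x‖ ≤ |C₁| + |γ'| := by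
    intro ℓ x
    have h0 : 0 ≤ F ℓ x := le_max_right _ _
    rw [Real.norm_eq_abs, abs_of_nonneg h0]
    rcases Nat.eq_zero_or_pos ℓ with h | h
    · subst h
      simp only [hFdef, Nat.cast_zero, div_zero, zero_sub]
      have : -γ' ≤ |γ'| := neg_le_abs γ'
      have : (0:ℝ) ≤ |C₁| := abs_nonneg C₁
      refine max_le (by linarith [neg_le_abs γ']) (by positivity)
    · have hφ : φ ℓ x ≤ ℓ * C₁ := by
        obtain ⟨m, rfl⟩ : ∃ m, ℓ = m + 1 := ⟨ℓ - 1, by omega⟩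
        exact_mod_cast hgrow m x
      have hℓ : (0:ℝ) < ℓ := by exact_mod_cast h
      have : φ ℓ x / ℓ ≤ C₁ := by
        rw [div_le_iff₀ hℓ]; linarith [hφ]
      refine max_le ?_ (by positivity)
      have := le_abs_self C₁
      have := neg_le_abs γ'
      linarith
  have hItend : Tendsto I atTop (𝓝 0) := by
    have h0 : (0:ℝ) = ∫ (_ : X), (0:ℝ) ∂μ := by simp
    rw [hIdef, h0]
    refine tendsto_integral_of_dominated_convergence (fun _ => |C₁| + |γ'|)
      (fun ℓ => (hFcont ℓ).aestronglyMeasurable) (integrable_const _)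
      (fun ℓ => Filter.Eventually.of_forall fun x => hFbound ℓ x) ?_
    filter_upwards [hlim] with x hx
    have hbdd : IsBoundedUnder (· ≤ ·) atTop (fun n : ℕ => φ n x / n) := by
      refine isBoundedUnder_of_eventually_le (a := max C₁ 0) ?_
      filter_upwards [eventually_ge_atTop 1] with n hn
      rcases Nat.eq_zero_or_pos n with h | h
      · omega
      · obtain ⟨m, rfl⟩ : ∃ m, n = m + 1 := ⟨n - 1, by omega⟩
        have hℓ : (0:ℝ) < (m + 1 : ℕ) := by positivity
        refine le_max_of_le_left ?_
        rw [div_le_iff₀ hℓ]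
        have := hgrow m x
        push_cast
        push_cast at this
        linarith
    have hev : ∀ᶠ ℓ in atTop, F ℓ x = 0 := by
      have hlt : ∀ᶠ ℓ in atTop, φ ℓ x / ℓ < γ' :=
        eventually_lt_of_limsup_lt (lt_of_le_of_lt hx hγ'₁) hbdd
      filter_upwards [hlt] with ℓ hℓ
      simp only [hFdef]
      exact max_eq_right (by linarith)
    exact tendsto_const_nhds.congr' (by filter_upwards [hev] with ℓ h using h.symm)
  -- the bad sets
  set B : ℕ → Set X := fun ℓ =>
    {x | ∃ n, 1 ≤ n ∧ 0 < ∑ i ∈ Finset.range n, (φ ℓ ((f^[ℓ])^[i] x) - γ₂ * ℓ)} with hBdef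
  have hBmeas : ∀ ℓ, MeasurableSet (B ℓ) := by
    intro ℓ
    have : B ℓ = ⋃ n, ⋃ (_ : 1 ≤ n),
        {x | 0 < ∑ i ∈ Finset.range n, (φ ℓ ((f^[ℓ])^[i] x) - γ₂ * ℓ)} := by
      ext x; simp [hBdef]
    rw [this]
    refine MeasurableSet.iUnion fun n => MeasurableSet.iUnion fun _ => ?_
    exact measurableSet_lt measurable_const
      (Finset.measurable_sum _ fun i _ =>
        ((hcont ℓ).measurable.comp ((hf.iterate ℓ).iterate i)).sub measurable_const)
  -- the key measure bound
  have hkey : ∀ ℓ : ℕ, 1 ≤ ℓ → (μ (B ℓ)).toReal ≤ I ℓ / c := by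
    intro ℓ hℓ
    have hℓR : (0:ℝ) < ℓ := by exact_mod_cast hℓ
    obtain ⟨Cℓ, hCℓ⟩ := hbd (φ ℓ) (hcont ℓ)
    set g : X → ℝ := fun x => φ ℓ x - γ₂ * ℓ with hgdef
    have hgmeas : Measurable g := (hcont ℓ).measurable.sub measurable_const
    have hgbd : ∀ x, |g x| ≤ Cℓ + |γ₂ * ℓ| := by
      intro x
      calc |g x| ≤ |φ ℓ x| + |γ₂ * ℓ| := abs_sub _ _
        _ ≤ Cℓ + |γ₂ * ℓ| := by linarith [hCℓ x]
    have hopf := hopf_maximal μ (hf.iterate ℓ) (hinv.iterate ℓ) hgmeas hgbd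
    -- identify the set
    have hBset : B ℓ = {x | ∃ n, 1 ≤ n ∧ 0 < ∑ i ∈ Finset.range n, g ((f^[ℓ])^[i] x)} := rfl
    rw [← hBset] at hopf
    -- split the integral
    have hg'int : Integrable (fun x => φ ℓ x - γ' * ℓ) μ := by
      refine hintg _ (Cℓ + |γ' * ℓ|) ((hcont ℓ).measurable.sub measurable_const) fun x => ?_
      calc |φ ℓ x - γ' * ℓ| ≤ |φ ℓ x| + |γ' * ℓ| := abs_sub _ _
        _ ≤ Cℓ + |γ' * ℓ| := by linarith [hCℓ x]
    have hmaxint : Integrable (fun x => max (φ ℓ x - γ' * ℓ) 0) μ := by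
      refine hintg _ (|Cℓ| + |γ' * ℓ|) (((hcont ℓ).sub continuous_const).max continuous_const).measurable fun x => ?_
      rw [abs_of_nonneg (le_max_right _ _)]
      refine max_le ?_ (by positivity)
      calc φ ℓ x - γ' * ℓ ≤ |φ ℓ x| + |γ' * ℓ| := by
            have := (abs_le.mp (abs_sub (φ ℓ x) (γ' * ℓ))).2
            linarith [le_abs_self (φ ℓ x - γ' * ℓ), (abs_sub (φ ℓ x) (γ' * ℓ))]
        _ ≤ |Cℓ| + |γ' * ℓ| := by linarith [hCℓ x, le_abs_self Cℓ]
    have hsplit : ∫ x in B ℓ, g x ∂μ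
        = (∫ x in B ℓ, (φ ℓ x - γ' * ℓ) ∂μ) - (μ (B ℓ)).toReal * (c * ℓ) := by
      have : ∀ x, g x = (φ ℓ x - γ' * ℓ) - c * ℓ := by
        intro x; rw [hgdef, hcdef]; ring
      simp only [this]
      rw [integral_sub hg'int.integrableOn (integrable_const _).integrableOn,
        setIntegral_const]
      simp [smul_eq_mul, measureReal_def]
    have hstep1 : ∫ x in B ℓ, (φ ℓ x - γ' * ℓ) ∂μ ≤ ∫ x in B ℓ, max (φ ℓ x - γ' * ℓ) 0 ∂μ :=
      setIntegral_mono_on hg'int.integrableOn hmaxint.integrableOn (hBmeas ℓ)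
        fun x _ => le_max_left _ _
    have hstep2 : ∫ x in B ℓ, max (φ ℓ x - γ' * ℓ) 0 ∂μ ≤ ∫ x, max (φ ℓ x - γ' * ℓ) 0 ∂μ :=
      setIntegral_le_integral hmaxint (Filter.Eventually.of_forall fun x => le_max_right _ _)
    have hstep3 : ∫ x, max (φ ℓ x - γ' * ℓ) 0 ∂μ = ℓ * I ℓ := by
      rw [hIdef, ← MeasureTheory.integral_const_mul]
      congr 1
      ext x
      rw [hFdef]
      have : (ℓ:ℝ) * max (φ ℓ x / ℓ - γ') 0 = max ((ℓ:ℝ) * (φ ℓ x / ℓ - γ')) ((ℓ:ℝ) * 0) :=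
        mul_max_of_nonneg _ _ hℓR.le
      rw [this, mul_zero, mul_sub, mul_div_cancel₀ _ hℓR.ne', mul_comm (ℓ:ℝ) γ']
    have hfinal : (μ (B ℓ)).toReal * (c * ℓ) ≤ ℓ * I ℓ := by
      rw [hstep3] at hstep2
      linarith
    rw [le_div_iff₀ hc0]
    nlinarith [ENNReal.toReal_nonneg (a := μ (B ℓ))]
  -- identify the good set with the complement of B ℓ
  have hHB : ∀ ℓ : ℕ, 1 ≤ ℓ → {x | ∀ n : ℕ, 1 ≤ n →
      (∑ i ∈ Finset.range n, φ ℓ (f^[i * ℓ] x)) / (n * ℓ : ℝ) ≤ γ₂} = (B ℓ)ᶜ := by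
    intro ℓ hℓ
    have hℓR : (0:ℝ) < ℓ := by exact_mod_cast hℓ
    ext x
    simp only [Set.mem_setOf_eq, Set.mem_compl_iff, hBdef, not_exists, not_and, not_lt]
    have hiter : ∀ i : ℕ, (f^[ℓ])^[i] x = f^[i * ℓ] x := by
      intro i
      rw [Nat.mul_comm i ℓ, Function.iterate_mul]
    constructor
    · intro h n hn
      have hnR : (0:ℝ) < n := by exact_mod_cast hn
      have h1 := h n hn
      rw [div_le_iff₀ (by positivity)] at h1
      have h2 : ∑ i ∈ Finset.range n, (φ ℓ ((f^[ℓ])^[i] x) - γ₂ * ℓ)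
          = (∑ i ∈ Finset.range n, φ ℓ (f^[i * ℓ] x)) - n * (γ₂ * ℓ) := by
        rw [Finset.sum_sub_distrib, Finset.sum_const, Finset.card_range]
        congr 1
        · exact Finset.sum_congr rfl fun i _ => by rw [hiter i]
        · simp [nsmul_eq_mul]
      rw [h2]
      nlinarith
    · intro h n hn
      have hnR : (0:ℝ) < n := by exact_mod_cast hn
      have h1 := h n hn
      have h2 : ∑ i ∈ Finset.range n, (φ ℓ ((f^[ℓ])^[i] x) - γ₂ * ℓ)
          = (∑ i ∈ Finset.range n, φ ℓ (f^[i * ℓ] x)) - n * (γ₂ * ℓ) := by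
        rw [Finset.sum_sub_distrib, Finset.sum_const, Finset.card_range]
        congr 1
        · exact Finset.sum_congr rfl fun i _ => by rw [hiter i]
        · simp [nsmul_eq_mul]
      rw [h2] at h1
      rw [div_le_iff₀ (by positivity)]
      nlinarith
  -- conclude
  have hmtend : Tendsto (fun ℓ => (μ (B ℓ)).toReal) atTop (𝓝 0) := by
    have hdiv : Tendsto (fun ℓ => I ℓ / c) atTop (𝓝 0) := by
      have := hItend.div_const c
      simpa using this
    refine squeeze_zero' (Filter.Eventually.of_forall fun ℓ => ENNReal.toReal_nonneg) ?_ hdiv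
    filter_upwards [eventually_ge_atTop 1] with ℓ hℓ using hkey ℓ hℓ
  have hB0 : Tendsto (fun ℓ => μ (B ℓ)) atTop (𝓝 0) := by
    have h1 : Tendsto (fun ℓ => ENNReal.ofReal ((μ (B ℓ)).toReal)) atTop (𝓝 (ENNReal.ofReal 0)) :=
      (ENNReal.continuous_ofReal.tendsto 0).comp hmtend
    simp only [ENNReal.ofReal_zero] at h1
    refine h1.congr fun ℓ => ?_
    exact ENNReal.ofReal_toReal (measure_ne_top μ _)
  have hcompl : Tendsto (fun ℓ => μ ((B ℓ)ᶜ)) atTop (𝓝 1) := by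
    have h1 : Tendsto (fun ℓ => (1 : ENNReal) - μ (B ℓ)) atTop (𝓝 (1 - 0)) :=
      ENNReal.Tendsto.sub tendsto_const_nhds hB0 (Or.inl ENNReal.one_ne_top)
    simp only [tsub_zero] at h1
    refine h1.congr fun ℓ => ?_
    rw [measure_compl (hBmeas ℓ) (measure_ne_top μ _), measure_univ]
  refine hcompl.congr' ?_
  filter_upwards [eventually_ge_atTop 1] with ℓ hℓ
  rw [hHB ℓ hℓ]
end

section
/- Let f be a C^1 diffeomorphism of a compact Riemannian manifold M with two continuous Df-invariant sub-bundles E and F of TM, and let μ be an f-ergodic Borel probability measure. Suppose γ_1 < χ_E^−(μ) and γ_2 > χ_F^+(μ), where χ_E^−(μ) = lim_n (1/n) log m(Df^n|_{E(x)}) and χ_F^+(μ) = lim_n (1/n) log‖Df^n|_{F(x)}‖ for μ-a.e. x. Then μ(Λ_ℓ(γ_1, γ_2, E, F)) → 1 as ℓ → ∞, where Λ_ℓ(γ_1, γ_2, E, F) is the set of x such that for all n ∈ ℕ: (1/(nℓ))·Σ_{i=0}^{n−1} log m(Df^ℓ|_{E(f^{iℓ}x)}) ≥ γ_1 and (1/(nℓ))·Σ_{i=0}^{n−1}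 log‖Df^ℓ|_{F(f^{iℓ}x)}‖ ≤ γ_2. -/
set_option linter.unusedSectionVars false
set_option linter.unnecessarySimpa false
set_option maxHeartbeats 1000000

open MeasureTheory Filter Topology

namespace Stmt5Aux

variable {X : Type*} [MetricSpace X] [CompactSpace X] [MeasurableSpace X] [BorelSpace X]

/-- Birkhoff sum. -/
def bS (T : X → X) (w : X → ℝ) (n : ℕ) (x : X) : ℝ := ∑ i ∈ Finset.range n, w (T^[i] x)

lemma bS_def (T : X → X) (w : X → ℝ) (n : ℕ) (x : X) :
    bS T w n x = ∑ i ∈ Finset.range n, w (T^[i] x) := rfl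

lemma bS_one (T : X → X) (w : X → ℝ) (x : X) : bS T w 1 x = w x := by simp [bS]

lemma bS_succ (T : X → X) (w : X → ℝ) (n : ℕ) (x : X) :
    bS T w (n + 1) x = w x + bS T w n (T x) := by
  unfold bS
  rw [Finset.sum_range_succ']
  simp only [Function.iterate_succ_apply, Function.iterate_zero_apply]
  ring

/-- Running maximum `Qf T w N x = max_{1 ≤ n ≤ N+1} bS T w n x`. -/
noncomputable def Qf (T : X → X) (w : X → ℝ) : ℕ → X → ℝ
  | 0 => w
  | (N + 1) => fun x => w x + max (Qf T w N (T x)) 0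

lemma Qf_cont {T : X → X} {w : X → ℝ} (hT : Continuous T) (hw : Continuous w) (N : ℕ) :
    Continuous (Qf T w N) := by
  induction N with
  | zero => exact hw
  | succ N ih => exact hw.add (((ih.comp hT)).max continuous_const)

lemma Qf_le_succ (T : X → X) (w : X → ℝ) (N : ℕ) (x : X) : Qf T w N x ≤ Qf T w (N + 1) x := by
  induction N generalizing x with
  | zero => simpa [Qf] using le_max_left _ _
  | succ N ih =>
      show w x + max (Qf T w N (T x)) 0 ≤ w x + max (Qf T w (N + 1) (T x)) 0
      exact add_le_add le_rfl (max_le_max (ih (T x)) le_rfl)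

lemma Qf_mono (T : X → X) (w : X → ℝ) {N M : ℕ} (h : N ≤ M) (x : X) :
    Qf T w N x ≤ Qf T w M x := by
  induction M with
  | zero => simp [Nat.le_zero.mp h]
  | succ M ih =>
      rcases Nat.lt_or_ge N (M + 1) with h' | h'
      · exact le_trans (ih (Nat.lt_succ_iff.mp h')) (Qf_le_succ T w M x)
      · have : N = M + 1 := le_antisymm h h'
        subst this; rfl

lemma Qf_ge_bS (T : X → X) (w : X → ℝ) (N : ℕ) (x : X) : bS T w (N + 1) x ≤ Qf T w N x := by
  induction N generalizing x with
  | zero => simp [bS_one, Qf]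
  | succ N ih =>
      rw [bS_succ]
      show w x + bS T w (N + 1) (T x) ≤ w x + max (Qf T w N (T x)) 0
      exact add_le_add le_rfl (le_trans (ih (T x)) (le_max_left _ _))

lemma Qf_pos_exists (T : X → X) (w : X → ℝ) (N : ℕ) (x : X) (h : 0 < Qf T w N x) :
    ∃ n, 1 ≤ n ∧ Qf T w N x ≤ bS T w n x := by
  induction N generalizing x with
  | zero => exact ⟨1, le_rfl, by simp [bS_one, Qf]⟩
  | succ N ih =>
      rcases le_or_gt (Qf T w N (T x)) 0 with h0 | h0
      · refine ⟨1, le_rfl, ?_⟩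
        rw [bS_one]
        show w x + max (Qf T w N (T x)) 0 ≤ w x
        simp [max_eq_right h0]
      · obtain ⟨m, hm1, hm⟩ := ih (T x) h0
        refine ⟨m + 1, by omega, ?_⟩
        rw [bS_succ]
        show w x + max (Qf T w N (T x)) 0 ≤ w x + bS T w m (T x)
        exact add_le_add le_rfl (by simpa [max_eq_left h0.le] using hm)

lemma Qf_le_self_add (T : X → X) (w : X → ℝ) (N : ℕ) (x : X) :
    Qf T w N x ≤ w x + max (Qf T w N (T x)) 0 := by
  cases N with
  | zero => simpa [Qf] using le_max_left (Qf T w 0 (T x)) 0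
  | succ N =>
      show w x + max (Qf T w N (T x)) 0 ≤ w x + max (Qf T w (N + 1) (T x)) 0
      exact add_le_add le_rfl (max_le_max (Qf_le_succ T w N (T x)) le_rfl)

lemma cont_integrable (μ : Measure X) [IsProbabilityMeasure μ] {w : X → ℝ}
    (hw : Continuous w) : Integrable w μ :=
  integrableOn_univ.mp (hw.continuousOn.integrableOn_compact isCompact_univ)

/-- Garsia's maximal ergodic inequality (finite-horizon version). -/
lemma maximal (μ : Measure X) [IsProbabilityMeasure μ] (T : X → X) (hT : Continuous T)
    (hTm : MeasurePreserving T μ μ) (w : X → ℝ) (hw : Continuous w) (N : ℕ) :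
    0 ≤ ∫ x in {y | 0 < Qf T w N y}, w x ∂μ := by
  set E := {y | 0 < Qf T w N y} with hE
  have hQc : Continuous (Qf T w N) := Qf_cont hT hw N
  have hEopen : IsOpen E := isOpen_lt continuous_const hQc
  have hMc : Continuous fun x => max (Qf T w N x) 0 := hQc.max continuous_const
  have int1 : Integrable (fun x => max (Qf T w N x) 0) μ := cont_integrable μ hMc
  have int2 : Integrable (fun x => max (Qf T w N (T x)) 0) μ := cont_integrable μ (hMc.comp hT)
  have int3 : Integrable (E.indicator w) μ :=
    (cont_integrable μ hw).indicator hEopen.measurableSet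
  have key : ∀ x, max (Qf T w N x) 0 ≤ E.indicator w x + max (Qf T w N (T x)) 0 := by
    intro x
    rcases le_or_gt (Qf T w N x) 0 with h0 | h0
    · have hx : x ∉ E := by simp [hE, not_lt.mpr h0]
      rw [Set.indicator_of_notMem hx, max_eq_right h0, zero_add]
      exact le_max_right _ _
    · have hx : x ∈ E := h0
      rw [Set.indicator_of_mem hx, max_eq_left h0.le]
      exact Qf_le_self_add T w N x
  have h1 : ∫ x, max (Qf T w N x) 0 ∂μ ≤
      ∫ x, (E.indicator w x + max (Qf T w N (T x)) 0) ∂μ :=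
    integral_mono int1 (int3.add int2) key
  rw [integral_add int3 int2] at h1
  have haesm : AEStronglyMeasurable (fun x => max (Qf T w N x) 0) (Measure.map T μ) := by
    rw [hTm.map_eq]; exact hMc.aestronglyMeasurable
  have h2 : ∫ x, max (Qf T w N (T x)) 0 ∂μ = ∫ x, max (Qf T w N x) 0 ∂μ := by
    calc ∫ x, max (Qf T w N (T x)) 0 ∂μ
        = ∫ y, max (Qf T w N y) 0 ∂(Measure.map T μ) :=
          (integral_map hTm.aemeasurable haesm).symm
      _ = ∫ x, max (Qf T w N x) 0 ∂μ := by rw [hTm.map_eq]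
  rw [h2, integral_indicator hEopen.measurableSet] at h1
  linarith

/-- Bound on the measure of the "bad set" where some Birkhoff average drops below `γ`. -/
lemma bad_le (μ : Measure X) [IsProbabilityMeasure μ] (T : X → X) (hT : Continuous T)
    (hTm : MeasurePreserving T μ μ) (w : X → ℝ) (hw : Continuous w) (γ K : ℝ)
    (hγK : γ < K) (hwK : ∀ x, w x ≤ K) :
    μ {x | ∃ n : ℕ, 1 ≤ n ∧ bS T w n x < γ * n} ≤
      ENNReal.ofReal ((K - ∫ x, w x ∂μ) / (K - γ)) := by
  set h : X → ℝ := fun x => γ - w x with hh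
  have hhc : Continuous h := continuous_const.sub hw
  have hbS : ∀ n x, bS T h n x = γ * n - bS T w n x := by
    intro n x
    simp only [bS, hh, Finset.sum_sub_distrib, Finset.sum_const, Finset.card_range,
      nsmul_eq_mul, mul_comm]
  have hcover : {x | ∃ n : ℕ, 1 ≤ n ∧ bS T w n x < γ * n} = ⋃ N, {y | 0 < Qf T h N y} := by
    ext x
    simp only [Set.mem_setOf_eq, Set.mem_iUnion]
    constructor
    · rintro ⟨n, hn1, hlt⟩
      obtain ⟨m, rfl⟩ : ∃ m, n = m + 1 := ⟨n - 1, by omega⟩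
      exact ⟨m, lt_of_lt_of_le (by rw [hbS]; linarith) (Qf_ge_bS T h m x)⟩
    · rintro ⟨N, hx⟩
      obtain ⟨n, hn1, hle⟩ := Qf_pos_exists T h N x hx
      refine ⟨n, hn1, ?_⟩
      have : 0 < bS T h n x := lt_of_lt_of_le hx hle
      rw [hbS] at this; linarith
  rw [hcover]
  have hdir : Directed (· ⊆ ·) fun N => {y : X | 0 < Qf T h N y} := by
    intro a b
    exact ⟨max a b, fun x hx => lt_of_lt_of_le hx (Qf_mono T h (le_max_left a b) x),
      fun x hx => lt_of_lt_of_le hx (Qf_mono T h (le_max_right a b) x)⟩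
  rw [hdir.measure_iUnion]
  refine iSup_le fun N => ?_
  set E := {y | 0 < Qf T h N y} with hEdef
  have hEopen : IsOpen E := isOpen_lt continuous_const (Qf_cont hT hhc N)
  have hEm : MeasurableSet E := hEopen.measurableSet
  have hint : Integrable w μ := cont_integrable μ hw
  have key := maximal μ T hT hTm h hhc N
  have h1 : ∫ x in E, w x ∂μ ≤ γ * (μ E).toReal := by
    have heq : ∫ x in E, h x ∂μ = γ * (μ E).toReal - ∫ x in E, w x ∂μ := by
      rw [hh, integral_sub (integrableOn_const (C := γ) (measure_ne_top μ E))
        hint.integrableOn, setIntegral_const, measureReal_def]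
      ring_nf
    rw [heq] at key; linarith
  have h2 : ∫ x in Eᶜ, w x ∂μ ≤ K * (μ Eᶜ).toReal := by
    have hle : ∫ x in Eᶜ, w x ∂μ ≤ ∫ _x in Eᶜ, K ∂μ :=
      integral_mono hint.integrableOn (integrableOn_const (measure_ne_top μ Eᶜ))
        fun x => hwK x
    rw [setIntegral_const, smul_eq_mul, measureReal_def] at hle
    linarith [hle]
  have hsplit : ∫ x in E, w x ∂μ + ∫ x in Eᶜ, w x ∂μ = ∫ x, w x ∂μ :=
    integral_add_compl hEm hint
  have hab : (μ E).toReal + (μ Eᶜ).toReal = 1 := by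
    rw [← ENNReal.toReal_add (measure_ne_top μ E) (measure_ne_top μ Eᶜ),
      measure_add_measure_compl hEm, measure_univ, ENNReal.toReal_one]
  have ha0 : (0:ℝ) ≤ (μ E).toReal := ENNReal.toReal_nonneg
  have hdiv : (μ E).toReal ≤ (K - ∫ x, w x ∂μ) / (K - γ) := by
    rw [le_div_iff₀ (by linarith)]
    have hKab : K * (μ E).toReal + K * (μ Eᶜ).toReal = K := by
      rw [← mul_add, hab, mul_one]
    linarith
  calc μ E = ENNReal.ofReal (μ E).toReal := (ENNReal.ofReal_toReal (measure_ne_top μ E)).symm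
    _ ≤ _ := ENNReal.ofReal_le_ofReal hdiv

end Stmt5Aux

open Stmt5Aux

/-- Proposition 3.9 of the paper. -/
theorem stmt_5 {X : Type*} [MetricSpace X] [CompactSpace X]
    [MeasurableSpace X] [BorelSpace X]
    (f : X → X) (hf : Continuous f)
    (μ : Measure X) [IsProbabilityMeasure μ] (herg : Ergodic f μ)
    (mE nF : ℕ → X → ℝ)
    (hmEpos : ∀ n x, 0 < mE n x) (hnFpos : ∀ n x, 0 < nF n x)
    (hmEcont : ∀ n, Continuous (mE n)) (hnFcont : ∀ n, Continuous (nF n))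
    (hmEsup : ∀ n m x, mE n x * mE m (f^[n] x) ≤ mE (n + m) x)
    (hnFsub : ∀ n m x, nF (n + m) x ≤ nF n x * nF m (f^[n] x))
    (χE χF : ℝ)
    (hχE : ∀ᵐ x ∂μ, Tendsto (fun n => Real.log (mE n x) / n) atTop (𝓝 χE))
    (hχF : ∀ᵐ x ∂μ, Tendsto (fun n => Real.log (nF n x) / n) atTop (𝓝 χF))
    (γ₁ γ₂ : ℝ) (hγ₁ : γ₁ < χE) (hγ₂ : χF < γ₂) :
    Tendsto (fun ℓ : ℕ => μ {x | ∀ n : ℕ, 1 ≤ n →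
        γ₁ ≤ (∑ i ∈ Finset.range n, Real.log (mE ℓ (f^[i * ℓ] x))) / (n * ℓ : ℝ) ∧
        (∑ i ∈ Finset.range n, Real.log (nF ℓ (f^[i * ℓ] x))) / (n * ℓ : ℝ) ≤ γ₂})
      atTop (𝓝 1) := by
  classical
  have hmp : MeasurePreserving f μ μ := herg.toMeasurePreserving
  have hne : Nonempty X := by
    by_contra hX
    have h0 : μ Set.univ = 0 := by
      rw [Set.univ_eq_empty_iff.mpr (not_nonempty_iff.mp hX)]
      exact measure_empty
    rw [measure_univ] at h0
    exact one_ne_zero h0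
  obtain ⟨x₁, -, hx₁⟩ := isCompact_univ.exists_isMinOn Set.univ_nonempty (hmEcont 1).continuousOn
  obtain ⟨x₂, -, hx₂⟩ := isCompact_univ.exists_isMaxOn Set.univ_nonempty (hnFcont 1).continuousOn
  set cE : ℝ := Real.log (mE 1 x₁) with hcE
  set cF : ℝ := Real.log (nF 1 x₂) with hcF
  have hlbE : ∀ ℓ : ℕ, 1 ≤ ℓ → ∀ x, (ℓ : ℝ) * cE ≤ Real.log (mE ℓ x) := by
    intro ℓ hℓ
    induction ℓ, hℓ using Nat.le_induction with
    | base =>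
        intro x
        simpa [hcE] using Real.log_le_log (hmEpos 1 x₁) (hx₁ (Set.mem_univ x))
    | succ ℓ hℓ ih =>
        intro x
        have h1 : mE ℓ x * mE 1 (f^[ℓ] x) ≤ mE (ℓ + 1) x := hmEsup ℓ 1 x
        have h2 : Real.log (mE ℓ x * mE 1 (f^[ℓ] x)) ≤ Real.log (mE (ℓ + 1) x) :=
          Real.log_le_log (mul_pos (hmEpos ℓ x) (hmEpos 1 _)) h1
        rw [Real.log_mul (hmEpos ℓ x).ne' (hmEpos 1 _).ne'] at h2
        have h3 : cE ≤ Real.log (mE 1 (f^[ℓ] x)) := by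
          simpa [hcE] using Real.log_le_log (hmEpos 1 x₁) (hx₁ (Set.mem_univ (f^[ℓ] x)))
        have h4 := ih x
        push_cast
        push_cast at h4
        linarith
  have hubF : ∀ ℓ : ℕ, 1 ≤ ℓ → ∀ x, Real.log (nF ℓ x) ≤ (ℓ : ℝ) * cF := by
    intro ℓ hℓ
    induction ℓ, hℓ using Nat.le_induction with
    | base =>
        intro x
        simpa [hcF] using Real.log_le_log (hnFpos 1 x) (hx₂ (Set.mem_univ x))
    | succ ℓ hℓ ih =>
        intro x
        have h1 : nF (ℓ + 1) x ≤ nF ℓ x * nF 1 (f^[ℓ] x) := hnFsub ℓ 1 x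
        have h2 : Real.log (nF (ℓ + 1) x) ≤ Real.log (nF ℓ x * nF 1 (f^[ℓ] x)) :=
          Real.log_le_log (hnFpos (ℓ + 1) x) h1
        rw [Real.log_mul (hnFpos ℓ x).ne' (hnFpos 1 _).ne'] at h2
        have h3 : Real.log (nF 1 (f^[ℓ] x)) ≤ cF := by
          simpa [hcF] using Real.log_le_log (hnFpos 1 (f^[ℓ] x)) (hx₂ (Set.mem_univ (f^[ℓ] x)))
        have h4 := ih x
        push_cast
        push_cast at h4
        linarith
  set L : ℕ → Set X := fun ℓ => {x | ∀ n : ℕ, 1 ≤ n →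
      γ₁ ≤ (∑ i ∈ Finset.range n, Real.log (mE ℓ (f^[i * ℓ] x))) / (n * ℓ : ℝ) ∧
      (∑ i ∈ Finset.range n, Real.log (nF ℓ (f^[i * ℓ] x))) / (n * ℓ : ℝ) ≤ γ₂} with hL
  have hAcont : ∀ ℓ n : ℕ, Continuous fun x =>
      (∑ i ∈ Finset.range n, Real.log (mE ℓ (f^[i * ℓ] x))) / ((n : ℝ) * ℓ) :=
    fun ℓ n => (continuous_finset_sum _ fun i _ =>
      Continuous.log ((hmEcont ℓ).comp (hf.iterate (i * ℓ)))
        fun x => (hmEpos ℓ (f^[i * ℓ] x)).ne').div_const _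
  have hBcont : ∀ ℓ n : ℕ, Continuous fun x =>
      (∑ i ∈ Finset.range n, Real.log (nF ℓ (f^[i * ℓ] x))) / ((n : ℝ) * ℓ) :=
    fun ℓ n => (continuous_finset_sum _ fun i _ =>
      Continuous.log ((hnFcont ℓ).comp (hf.iterate (i * ℓ)))
        fun x => (hnFpos ℓ (f^[i * ℓ] x)).ne').div_const _
  have hclosed : ∀ ℓ, IsClosed (L ℓ) := by
    intro ℓ
    have hrw : L ℓ = ⋂ n : ℕ, ⋂ _ : 1 ≤ n,
        ({x | γ₁ ≤ (∑ i ∈ Finset.range n, Real.log (mE ℓ (f^[i * ℓ] x))) / ((n : ℝ) * ℓ)} ∩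
         {x | (∑ i ∈ Finset.range n, Real.log (nF ℓ (f^[i * ℓ] x))) / ((n : ℝ) * ℓ) ≤ γ₂}) := by
      ext x
      simp only [hL, Set.mem_setOf_eq, Set.mem_iInter, Set.mem_inter_iff]
    rw [hrw]
    exact isClosed_iInter fun n => isClosed_iInter fun _ =>
      (isClosed_le continuous_const (hAcont ℓ n)).inter
        (isClosed_le (hBcont ℓ n) continuous_const)
  have hd1 : (0:ℝ) < χE - γ₁ := sub_pos.mpr hγ₁
  have hd2 : (0:ℝ) < γ₂ - χF := sub_pos.mpr hγ₂
  have hcompl : Tendsto (fun ℓ => μ (L ℓ)ᶜ) atTop (𝓝 0) := by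
    rw [ENNReal.tendsto_atTop_zero]
    intro εE hεE
    set δ : ℝ := (min 1 εE).toReal with hδdef
    have hmne : min 1 εE ≠ ⊤ := ((min_le_left _ _).trans_lt ENNReal.one_lt_top).ne
    have hδpos : 0 < δ := ENNReal.toReal_pos (lt_min zero_lt_one hεE).ne' hmne
    have hδle : ENNReal.ofReal δ ≤ εE := by
      rw [hδdef, ENNReal.ofReal_toReal hmne]
      exact min_le_right _ _
    set ε : ℝ := min (δ * (χE - γ₁) / 8) (min (δ * (γ₂ - χF) / 8) 1) with hεdef
    have hεpos : 0 < ε :=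
      lt_min (by positivity) (lt_min (by positivity) one_pos)
    have hεle1 : ε ≤ δ * (χE - γ₁) / 8 := min_le_left _ _
    have hεle2 : ε ≤ δ * (γ₂ - χF) / 8 := (min_le_right _ _).trans (min_le_left _ _)
    set uu : ℕ → X → ℝ := fun ℓ x => min (Real.log (mE ℓ x) / ℓ) (χE + ε) with huu
    set vv : ℕ → X → ℝ := fun ℓ x => min (-(Real.log (nF ℓ x) / ℓ)) (ε - χF) with hvv
    have hucont : ∀ ℓ, Continuous (uu ℓ) := fun ℓ =>
      ((Continuous.log (hmEcont ℓ) fun x => (hmEpos ℓ x).ne').div_const _).min continuous_const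
    have hvcont : ∀ ℓ, Continuous (vv ℓ) := fun ℓ =>
      (((Continuous.log (hnFcont ℓ) fun x => (hnFpos ℓ x).ne').div_const _).neg).min
        continuous_const
    have huK : ∀ ℓ x, uu ℓ x ≤ χE + ε := fun ℓ x => min_le_right _ _
    have hvK : ∀ ℓ x, vv ℓ x ≤ ε - χF := fun ℓ x => min_le_right _ _
    have hIE : Tendsto (fun ℓ => ∫ x, uu ℓ x ∂μ) atTop (𝓝 χE) := by
      have hlim : ∀ᵐ x ∂μ, Tendsto (fun ℓ => uu ℓ x) atTop (𝓝 χE) := by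
        filter_upwards [hχE] with x hx
        have h := hx.min (tendsto_const_nhds (x := χE + ε))
        rwa [min_eq_left (by linarith)] at h
      have hbound : ∀ᶠ ℓ in atTop, ∀ᵐ x ∂μ, ‖uu ℓ x‖ ≤ max |cE| (|χE| + ε) := by
        filter_upwards [eventually_ge_atTop 1] with ℓ hℓ
        refine ae_of_all μ fun x => ?_
        have hlpos : (0:ℝ) < ℓ := by exact_mod_cast hℓ
        have h1 : cE ≤ Real.log (mE ℓ x) / ℓ := by
          rw [le_div_iff₀ hlpos]
          calc cE * ℓ = (ℓ : ℝ) * cE := by ring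
            _ ≤ _ := hlbE ℓ hℓ x
        rw [Real.norm_eq_abs, abs_le]
        constructor
        · have hlow : -(max |cE| (|χE| + ε)) ≤ uu ℓ x := by
            simp only [huu]
            refine le_min ?_ ?_
            · have := neg_abs_le cE
              have := le_max_left |cE| (|χE| + ε)
              linarith
            · have := neg_abs_le χE
              have := le_max_right |cE| (|χE| + ε)
              linarith
          linarith
        · exact le_trans (huK ℓ x)
            (le_trans (by linarith [le_abs_self χE]) (le_max_right |cE| (|χE| + ε)))
      have h := tendsto_integral_filter_of_dominated_convergence
        (bound := fun _ => max |cE| (|χE| + ε))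
        (Eventually.of_forall fun ℓ => (hucont ℓ).aestronglyMeasurable) hbound
        (integrable_const _) hlim
      simpa [integral_const] using h
    have hIF : Tendsto (fun ℓ => ∫ x, vv ℓ x ∂μ) atTop (𝓝 (-χF)) := by
      have hlim : ∀ᵐ x ∂μ, Tendsto (fun ℓ => vv ℓ x) atTop (𝓝 (-χF)) := by
        filter_upwards [hχF] with x hx
        have h := hx.neg.min (tendsto_const_nhds (x := ε - χF))
        rwa [min_eq_left (by linarith)] at h
      have hbound : ∀ᶠ ℓ in atTop, ∀ᵐ x ∂μ, ‖vv ℓ x‖ ≤ max |cF| (|χF| + ε) := by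
        filter_upwards [eventually_ge_atTop 1] with ℓ hℓ
        refine ae_of_all μ fun x => ?_
        have hlpos : (0:ℝ) < ℓ := by exact_mod_cast hℓ
        have h1 : Real.log (nF ℓ x) / ℓ ≤ cF := by
          rw [div_le_iff₀ hlpos]
          calc Real.log (nF ℓ x) ≤ (ℓ : ℝ) * cF := hubF ℓ hℓ x
            _ = cF * ℓ := by ring
        rw [Real.norm_eq_abs, abs_le]
        constructor
        · have hlow : -(max |cF| (|χF| + ε)) ≤ vv ℓ x := by
            simp only [hvv]
            refine le_min ?_ ?_
            · have := le_abs_self cF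
              have := le_max_left |cF| (|χF| + ε)
              linarith [h1]
            · have := neg_abs_le (-χF)
              have := le_max_right |cF| (|χF| + ε)
              have habs : |(-χF)| = |χF| := abs_neg χF
              linarith [habs]
          linarith
        · have hup : vv ℓ x ≤ ε - χF := hvK ℓ x
          have h5 : -χF ≤ |χF| := neg_le_abs χF
          have := le_max_right |cF| (|χF| + ε)
          linarith
      have h := tendsto_integral_filter_of_dominated_convergence
        (bound := fun _ => max |cF| (|χF| + ε))
        (Eventually.of_forall fun ℓ => (hvcont ℓ).aestronglyMeasurable) hbound
        (integrable_const _) hlim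
      simpa [integral_const] using h
    have hEint : ∀ᶠ ℓ in atTop, χE - ε ≤ ∫ x, uu ℓ x ∂μ :=
      hIE.eventually (eventually_ge_nhds (by linarith))
    have hFint : ∀ᶠ ℓ in atTop, -χF - ε ≤ ∫ x, vv ℓ x ∂μ :=
      hIF.eventually (eventually_ge_nhds (by linarith))
    have hEv : ∀ᶠ ℓ in atTop, μ (L ℓ)ᶜ ≤ εE := by
      filter_upwards [hEint, hFint, eventually_ge_atTop 1] with ℓ hI1 hI2 hℓ
      have hlpos : (0:ℝ) < ℓ := by exact_mod_cast hℓ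
      have hgc : Continuous (f^[ℓ]) := hf.iterate ℓ
      have hgm : MeasurePreserving (f^[ℓ]) μ μ := hmp.iterate ℓ
      have b1 := bad_le μ (f^[ℓ]) hgc hgm (uu ℓ) (hucont ℓ) γ₁ (χE + ε)
        (by linarith) (huK ℓ)
      have b2 := bad_le μ (f^[ℓ]) hgc hgm (vv ℓ) (hvcont ℓ) (-γ₂) (ε - χF)
        (by linarith) (hvK ℓ)
      have hsub : (L ℓ)ᶜ ⊆
          {x | ∃ n : ℕ, 1 ≤ n ∧ bS (f^[ℓ]) (uu ℓ) n x < γ₁ * n} ∪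
          {x | ∃ n : ℕ, 1 ≤ n ∧ bS (f^[ℓ]) (vv ℓ) n x < (-γ₂) * n} := by
        intro x hx
        simp only [hL, Set.mem_compl_iff, Set.mem_setOf_eq] at hx
        push_neg at hx
        obtain ⟨n, hn1, hnot⟩ := hx
        have hnpos : (0:ℝ) < n := by exact_mod_cast hn1
        have hnl : (0:ℝ) < (n : ℝ) * ℓ := mul_pos hnpos hlpos
        rcases le_or_gt γ₁
            ((∑ i ∈ Finset.range n, Real.log (mE ℓ (f^[i * ℓ] x))) / ((n : ℝ) * ℓ)) with hA | hA
        · -- F-side failure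
          have hB := hnot hA
          have hS : γ₂ * ((n : ℝ) * ℓ) <
              ∑ i ∈ Finset.range n, Real.log (nF ℓ (f^[i * ℓ] x)) := by
            rw [← lt_div_iff₀ hnl]; exact hB
          refine Or.inr ⟨n, hn1, ?_⟩
          have hle : bS (f^[ℓ]) (vv ℓ) n x ≤
              (∑ i ∈ Finset.range n, -Real.log (nF ℓ (f^[i * ℓ] x))) / ℓ := by
            rw [bS_def, Finset.sum_div]
            refine Finset.sum_le_sum fun i _ => ?_
            have hgi : (f^[ℓ])^[i] x = f^[i * ℓ] x := by
              rw [mul_comm, Function.iterate_mul]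
            simp only [hvv, hgi]
            calc min (-(Real.log (nF ℓ (f^[i * ℓ] x)) / ℓ)) (ε - χF)
                ≤ -(Real.log (nF ℓ (f^[i * ℓ] x)) / ℓ) := min_le_left _ _
              _ = -Real.log (nF ℓ (f^[i * ℓ] x)) / ℓ := by ring
          have hlt : (∑ i ∈ Finset.range n, -Real.log (nF ℓ (f^[i * ℓ] x))) / ℓ <
              (-γ₂) * n := by
            rw [div_lt_iff₀ hlpos, Finset.sum_neg_distrib]
            nlinarith
          exact lt_of_le_of_lt hle hlt
        · -- E-side failure
          have hS : (∑ i ∈ Finset.range n, Real.log (mE ℓ (f^[i * ℓ] x))) <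
              γ₁ * ((n : ℝ) * ℓ) := by
            rw [← div_lt_iff₀ hnl]; exact hA
          refine Or.inl ⟨n, hn1, ?_⟩
          have hle : bS (f^[ℓ]) (uu ℓ) n x ≤
              (∑ i ∈ Finset.range n, Real.log (mE ℓ (f^[i * ℓ] x))) / ℓ := by
            rw [bS_def, Finset.sum_div]
            refine Finset.sum_le_sum fun i _ => ?_
            have hgi : (f^[ℓ])^[i] x = f^[i * ℓ] x := by
              rw [mul_comm, Function.iterate_mul]
            simp only [huu, hgi]
            exact min_le_left _ _
          have hlt : (∑ i ∈ Finset.range n, Real.log (mE ℓ (f^[i * ℓ] x))) / ℓ <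
              γ₁ * n := by
            rw [div_lt_iff₀ hlpos]
            nlinarith
          exact lt_of_le_of_lt hle hlt
      have hb1' : (χE + ε - ∫ x, uu ℓ x ∂μ) / (χE + ε - γ₁) ≤ δ / 2 := by
        rw [div_le_iff₀ (by linarith)]
        have p1 : 0 ≤ δ * (χE - γ₁) := by positivity
        have p2 : 0 ≤ δ * ε := by positivity
        linarith
      have hb2' : (ε - χF - ∫ x, vv ℓ x ∂μ) / (ε - χF - -γ₂) ≤ δ / 2 := by
        rw [div_le_iff₀ (by linarith)]
        have p1 : 0 ≤ δ * (γ₂ - χF) := by positivity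
        have p2 : 0 ≤ δ * ε := by positivity
        linarith
      calc μ (L ℓ)ᶜ
          ≤ μ ({x | ∃ n : ℕ, 1 ≤ n ∧ bS (f^[ℓ]) (uu ℓ) n x < γ₁ * n} ∪
              {x | ∃ n : ℕ, 1 ≤ n ∧ bS (f^[ℓ]) (vv ℓ) n x < (-γ₂) * n}) :=
            measure_mono hsub
        _ ≤ μ {x | ∃ n : ℕ, 1 ≤ n ∧ bS (f^[ℓ]) (uu ℓ) n x < γ₁ * n} +
            μ {x | ∃ n : ℕ, 1 ≤ n ∧ bS (f^[ℓ]) (vv ℓ) n x < (-γ₂) * n} :=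
            measure_union_le _ _
        _ ≤ ENNReal.ofReal ((χE + ε - ∫ x, uu ℓ x ∂μ) / (χE + ε - γ₁)) +
            ENNReal.ofReal ((ε - χF - ∫ x, vv ℓ x ∂μ) / (ε - χF - -γ₂)) :=
            add_le_add b1 b2
        _ ≤ ENNReal.ofReal (δ / 2) + ENNReal.ofReal (δ / 2) :=
            add_le_add (ENNReal.ofReal_le_ofReal hb1') (ENNReal.ofReal_le_ofReal hb2')
        _ = ENNReal.ofReal δ := by
            rw [← ENNReal.ofReal_add (by linarith) (by linarith)]
            norm_num
        _ ≤ εE := hδle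
    exact eventually_atTop.mp hEv
  have hcompl_eq : ∀ ℓ, μ (L ℓ) = 1 - μ (L ℓ)ᶜ := by
    intro ℓ
    calc μ (L ℓ) = μ ((L ℓ)ᶜᶜ) := by rw [compl_compl]
      _ = 1 - μ (L ℓ)ᶜ := prob_compl_eq_one_sub (hclosed ℓ).measurableSet.compl
  have final := ENNReal.Tendsto.sub (tendsto_const_nhds (x := (1 : ENNReal))
    (f := atTop (α := ℕ))) hcompl (Or.inl ENNReal.one_ne_top)
  simp only [tsub_zero] at final
  exact final.congr fun ℓ => (hcompl_eq ℓ).symm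
end

section
/- Let f be a C^1 diffeomorphism of a compact Riemannian manifold with continuous Df-invariant sub-bundles E and F, and μ an f-ergodic measure with χ_E^−(μ) > χ_F^+(μ). Then for any γ_1, γ_2 with χ_E^−(μ) > γ_1 > γ_2 > χ_F^+(μ), the measure of Δ(e^{(γ_1−γ_2)ℓ}, f^ℓ, E, F) tends to 1 as ℓ → ∞, where Δ(λ, g, E, F) = { x : Π_{j=0}^{k−1} m(Dg|_{E(g^j x)}) / ‖Dg|_{F(g^j x)}‖ ≥ λ^k for all k ≥ 1 }. -/
open MeasureTheory Filter Topology

section Aux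

variable {X : Type*}

/-- Birkhoff sum of `φ` along `T`. -/
private def birkS (T : X → X) (φ : X → ℝ) (k : ℕ) (x : X) : ℝ :=
  ∑ j ∈ Finset.range k, φ (T^[j] x)

private lemma birkS_succ (T : X → X) (φ : X → ℝ) (m : ℕ) (x : X) :
    birkS T φ (m + 1) x = φ x + birkS T φ m (T x) := by
  simp only [birkS, Finset.sum_range_succ']
  simp [Function.iterate_succ_apply, add_comm]

private lemma birkS_abs_le (T : X → X) (φ : X → ℝ) {Cb : ℝ} (hb : ∀ y, |φ y| ≤ Cb)
    (k : ℕ) (x : X) : |birkS T φ k x| ≤ (k : ℝ) * Cb := by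
  calc |birkS T φ k x| ≤ ∑ j ∈ Finset.range k, |φ (T^[j] x)| :=
        Finset.abs_sum_le_sum_abs _ _
    _ ≤ ∑ _j ∈ Finset.range k, Cb := Finset.sum_le_sum fun j _ => hb _
    _ = (k : ℝ) * Cb := by simp [mul_comm]

/-- Running maximum `max (0, S₁, …, S_N)`. -/
private def birkM (T : X → X) (φ : X → ℝ) : ℕ → X → ℝ
  | 0 => fun _ => 0
  | (N + 1) => fun x => max (birkM T φ N x) (birkS T φ (N + 1) x)

private lemma birkM_nonneg (T : X → X) (φ : X → ℝ) (N : ℕ) (x : X) :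
    0 ≤ birkM T φ N x := by
  induction N with
  | zero => simp [birkM]
  | succ N ih => exact le_trans ih (le_max_left _ _)

private lemma birkM_le (T : X → X) (φ : X → ℝ) {Cb : ℝ} (hb : ∀ y, |φ y| ≤ Cb)
    (hCb : 0 ≤ Cb) (N : ℕ) (x : X) : birkM T φ N x ≤ (N : ℝ) * Cb := by
  induction N with
  | zero => simp [birkM]
  | succ N ih =>
    refine max_le (le_trans ih ?_) ?_
    · have : (N : ℝ) ≤ (N : ℝ) + 1 := by linarith
      push_cast; nlinarith
    · have := le_trans (le_abs_self _) (birkS_abs_le T φ hb (N + 1) x)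
      push_cast at this ⊢; linarith

private lemma birkS_le_birkM (T : X → X) (φ : X → ℝ) {k N : ℕ} (h : k ≤ N) (hk : 1 ≤ k)
    (x : X) : birkS T φ k x ≤ birkM T φ N x := by
  induction N with
  | zero => omega
  | succ N ih =>
    rcases Nat.lt_or_ge k (N + 1) with h' | h'
    · exact le_trans (ih (by omega)) (le_max_left _ _)
    · have : k = N + 1 := by omega
      subst this; exact le_max_right _ _

private lemma birkM_pos_eq (T : X → X) (φ : X → ℝ) {N : ℕ} {x : X}
    (h : 0 < birkM T φ N x) : ∃ k, 1 ≤ k ∧ k ≤ N ∧ birkM T φ N x = birkS T φ k x := by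
  induction N with
  | zero => simp [birkM] at h
  | succ N ih =>
    rcases le_total (birkS T φ (N + 1) x) (birkM T φ N x) with h' | h'
    · have hM : birkM T φ (N + 1) x = birkM T φ N x := max_eq_left h'
      rw [hM] at h ⊢
      obtain ⟨k, h1, h2, h3⟩ := ih h
      exact ⟨k, h1, by omega, h3⟩
    · have hM : birkM T φ (N + 1) x = birkS T φ (N + 1) x := max_eq_right h'
      exact ⟨N + 1, by omega, le_rfl, hM⟩

private lemma birkM_mono (T : X → X) (φ : X → ℝ) {N M : ℕ} (h : N ≤ M) (x : X) :
    birkM T φ N x ≤ birkM T φ M x := by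
  induction M with
  | zero => simp_all
  | succ M ih =>
    rcases Nat.lt_or_ge N (M + 1) with h' | h'
    · exact le_trans (ih (by omega)) (le_max_left _ _)
    · have : N = M + 1 := by omega
      subst this; exact le_rfl

private lemma birkM_meas [MeasurableSpace X] {T : X → X} (hT : Measurable T)
    {φ : X → ℝ} (hφ : Measurable φ) (N : ℕ) : Measurable (birkM T φ N) := by
  have hS : ∀ k, Measurable (birkS T φ k) := fun k =>
    Finset.measurable_sum _ fun j _ => hφ.comp (hT.iterate j)
  induction N with
  | zero => simpa [birkM] using measurable_const
  | succ N ih => exact ih.max (hS (N + 1))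

/-- Garsia's key pointwise inequality. -/
private lemma garsia_ptwise (T : X → X) (φ : X → ℝ) (N : ℕ) (x : X)
    (h : 0 < birkM T φ N x) : birkM T φ N x ≤ φ x + birkM T φ N (T x) := by
  obtain ⟨k, hk1, hkN, hEq⟩ := birkM_pos_eq T φ h
  obtain ⟨m, rfl⟩ : ∃ m, k = m + 1 := ⟨k - 1, by omega⟩
  rw [hEq, birkS_succ]
  rcases Nat.eq_zero_or_pos m with hm | hm
  · subst hm
    simp only [birkS, Finset.range_zero, Finset.sum_empty]
    exact add_le_add_right (birkM_nonneg T φ N (T x)) _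
  · exact add_le_add_right (birkS_le_birkM T φ (by omega) hm (T x)) _

/-- Wiener/Garsia maximal inequality specialised to an indicator:
the set where the orbit frequency of visits to `Gᶜ` exceeds `θ` at some time
has measure at most `μ Gᶜ / θ`. -/
private lemma maximal_count [MeasurableSpace X] (μ : Measure X) [IsProbabilityMeasure μ]
    (T : X → X) (hTm : Measurable T) (hT : MeasurePreserving T μ μ)
    (G : Set X) (hG : MeasurableSet G) (θ : ℝ) (hθ : 0 < θ) :
    μ {x | ∃ k : ℕ, 1 ≤ k ∧
        θ * k < ∑ j ∈ Finset.range k, Gᶜ.indicator (fun _ => (1 : ℝ)) (T^[j] x)} ≤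
      μ Gᶜ / ENNReal.ofReal θ := by
  classical
  set φ : X → ℝ := fun x => Gᶜ.indicator (fun _ => (1 : ℝ)) x - θ with hφdef
  have hφm : Measurable φ :=
    (measurable_const.indicator hG.compl).sub measurable_const
  have hφb : ∀ x, |φ x| ≤ 1 + θ := by
    intro x
    refine abs_le.2 ⟨?_, ?_⟩ <;> by_cases hx : x ∈ Gᶜ <;>
      simp [hφdef, hx] <;> linarith
  have hCb : (0 : ℝ) ≤ 1 + θ := by linarith
  -- relation between birkS of φ and the count
  have hSrel : ∀ k x, birkS T φ k x
      = (∑ j ∈ Finset.range k, Gᶜ.indicator (fun _ => (1 : ℝ)) (T^[j] x)) - θ * k := by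
    intro k x
    simp [birkS, hφdef, Finset.sum_sub_distrib, mul_comm]
  set E : ℕ → Set X := fun N => {x | 0 < birkM T φ N x} with hEdef
  have hEmeas : ∀ N, MeasurableSet (E N) :=
    fun N => measurableSet_lt measurable_const (birkM_meas hTm hφm N)
  have hEmono : Monotone E := by
    intro N M h x hx
    exact lt_of_lt_of_le hx (birkM_mono T φ h x)
  -- the bad set equals ⋃ N, E N
  have hBadEq : {x | ∃ k : ℕ, 1 ≤ k ∧
      θ * k < ∑ j ∈ Finset.range k, Gᶜ.indicator (fun _ => (1 : ℝ)) (T^[j] x)}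
      = ⋃ N, E N := by
    ext x
    simp only [Set.mem_setOf_eq, Set.mem_iUnion, hEdef]
    constructor
    · rintro ⟨k, hk1, hk⟩
      refine ⟨k, lt_of_lt_of_le ?_ (birkS_le_birkM T φ le_rfl hk1 x)⟩
      rw [hSrel]; linarith
    · rintro ⟨N, hN⟩
      obtain ⟨k, hk1, -, hEq⟩ := birkM_pos_eq T φ hN
      refine ⟨k, hk1, ?_⟩
      have := hEq ▸ hN
      rw [hSrel] at this; linarith
  -- integrability
  have hφint : Integrable φ μ := by
    refine (integrable_const (1 + θ)).mono' hφm.aestronglyMeasurable ?_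
    exact Filter.Eventually.of_forall fun x => by simpa using hφb x
  have hMint : ∀ N, Integrable (birkM T φ N) μ := by
    intro N
    refine (integrable_const ((N : ℝ) * (1 + θ))).mono'
      (birkM_meas hTm hφm N).aestronglyMeasurable
      (Filter.Eventually.of_forall fun x => ?_)
    rw [Real.norm_eq_abs, abs_of_nonneg (birkM_nonneg T φ N x)]
    exact birkM_le T φ hφb hCb N x
  have hind_int : Integrable (Gᶜ.indicator (fun _ => (1 : ℝ))) μ :=
    (integrable_const (1 : ℝ)).indicator hG.compl
  -- key integral estimate for each N
  have hEN : ∀ N, θ * (μ (E N)).toReal ≤ (μ Gᶜ).toReal := by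
    intro N
    have hMm := birkM_meas hTm hφm N
    have h1 : ∫ x, birkM T φ N (T x) ∂μ = ∫ x, birkM T φ N x ∂μ := by
      have := integral_map (μ := μ) hTm.aemeasurable
        (f := birkM T φ N) hMm.aestronglyMeasurable
      rw [hT.map_eq] at this
      exact this.symm
    have hMTint : Integrable (fun x => birkM T φ N (T x)) μ := by
      refine (integrable_const ((N : ℝ) * (1 + θ))).mono'
        ((hMm.comp hTm).aestronglyMeasurable)
        (Filter.Eventually.of_forall fun x => ?_)
      rw [Real.norm_eq_abs, abs_of_nonneg (birkM_nonneg T φ N (T x))]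
      exact birkM_le T φ hφb hCb N (T x)
    have hpt : ∀ x, birkM T φ N x - birkM T φ N (T x) ≤ (E N).indicator φ x := by
      intro x
      by_cases hx : x ∈ E N
      · rw [Set.indicator_of_mem hx]
        have := garsia_ptwise T φ N x hx
        linarith
      · rw [Set.indicator_of_notMem hx]
        have h0 : birkM T φ N x = 0 := by
          have := birkM_nonneg T φ N x
          simp only [hEdef, Set.mem_setOf_eq, not_lt] at hx
          linarith
        have := birkM_nonneg T φ N (T x)
        linarith
    have h2 : (0 : ℝ) ≤ ∫ x in E N, φ x ∂μ := by
      have h3 : ∫ x, (birkM T φ N x - birkM T φ N (T x)) ∂μ = 0 := by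
        rw [integral_sub (hMint N) hMTint, h1, sub_self]
      have h4 : (0 : ℝ) ≤ ∫ x, (E N).indicator φ x ∂μ := by
        calc (0 : ℝ) = ∫ x, (birkM T φ N x - birkM T φ N (T x)) ∂μ := h3.symm
          _ ≤ ∫ x, (E N).indicator φ x ∂μ :=
              integral_mono ((hMint N).sub hMTint) (hφint.indicator (hEmeas N)) hpt
      rwa [integral_indicator (hEmeas N)] at h4
    have h5 : ∫ x in E N, φ x ∂μ
        = (∫ x in E N, Gᶜ.indicator (fun _ => (1 : ℝ)) x ∂μ) - θ * (μ (E N)).toReal := by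
      rw [hφdef]
      rw [integral_sub hind_int.integrableOn (integrableOn_const (measure_ne_top μ _))]
      rw [setIntegral_const, smul_eq_mul, mul_comm]
      rfl
    have h6 : ∫ x in E N, Gᶜ.indicator (fun _ => (1 : ℝ)) x ∂μ ≤ (μ Gᶜ).toReal := by
      have h7 := setIntegral_le_integral (s := E N) hind_int
        (Filter.Eventually.of_forall fun x =>
          Set.indicator_nonneg (fun _ _ => zero_le_one) x)
      have h8 : ∫ x, Gᶜ.indicator (fun _ => (1 : ℝ)) x ∂μ = (μ Gᶜ).toReal :=
        integral_indicator_one hG.compl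
      linarith
    linarith
  have hENbound : ∀ N, μ (E N) ≤ μ Gᶜ / ENNReal.ofReal θ := by
    intro N
    have h := hEN N
    have h1 : (μ (E N)).toReal ≤ (μ Gᶜ).toReal / θ := by
      rw [le_div_iff₀ hθ]; linarith
    calc μ (E N) = ENNReal.ofReal (μ (E N)).toReal :=
          (ENNReal.ofReal_toReal (measure_ne_top μ _)).symm
      _ ≤ ENNReal.ofReal ((μ Gᶜ).toReal / θ) := ENNReal.ofReal_le_ofReal h1
      _ = ENNReal.ofReal (μ Gᶜ).toReal / ENNReal.ofReal θ :=
          ENNReal.ofReal_div_of_pos hθ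
      _ = μ Gᶜ / ENNReal.ofReal θ := by rw [ENNReal.ofReal_toReal (measure_ne_top μ _)]
  rw [hBadEq]
  exact le_of_tendsto' (tendsto_measure_iUnion_atTop hEmono) hENbound

end Aux

section Cocycle

variable {X : Type*}

private lemma cocycle_lower (f : X → X) (mE : ℕ → X → ℝ) (hpos : ∀ n x, 0 < mE n x)
    (hsup : ∀ n m x, mE n x * mE m (f^[n] x) ≤ mE (n + m) x)
    {m₀ : ℝ} (hm₀pos : 0 < m₀) (hm₀ : ∀ x, m₀ ≤ mE 1 x) :
    ∀ (n : ℕ) (x : X), m₀ ^ (n + 1) ≤ mE (n + 1) x := by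
  intro n
  induction n with
  | zero => intro x; simpa using hm₀ x
  | succ n ih =>
    intro x
    calc m₀ ^ (n + 2) = m₀ ^ (n + 1) * m₀ := by ring
      _ ≤ mE (n + 1) x * mE 1 (f^[n + 1] x) :=
          mul_le_mul (ih x) (hm₀ _) hm₀pos.le (le_of_lt (lt_of_lt_of_le (pow_pos hm₀pos _) (ih x)))
      _ ≤ mE (n + 2) x := hsup (n + 1) 1 x

private lemma cocycle_upper (f : X → X) (nF : ℕ → X → ℝ) (hpos : ∀ n x, 0 < nF n x)
    (hsub : ∀ n m x, nF (n + m) x ≤ nF n x * nF m (f^[n] x))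
    {M₀ : ℝ} (hM₀pos : 0 < M₀) (hM₀ : ∀ x, nF 1 x ≤ M₀) :
    ∀ (n : ℕ) (x : X), nF (n + 1) x ≤ M₀ ^ (n + 1) := by
  intro n
  induction n with
  | zero => intro x; simpa using hM₀ x
  | succ n ih =>
    intro x
    calc nF (n + 2) x ≤ nF (n + 1) x * nF 1 (f^[n + 1] x) := hsub (n + 1) 1 x
      _ ≤ M₀ ^ (n + 1) * M₀ :=
          mul_le_mul (ih x) (hM₀ _) (le_of_lt (hpos _ _)) (pow_nonneg hM₀pos.le _)
      _ = M₀ ^ (n + 2) := by ring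

end Cocycle

/-- Corollary 3.10 of the paper, with the derivative data along the invariant sub-bundles
abstracted as cocycles: `mE n x` stands for `m(Df^n|_{E(x)})` and `nF n x` for
`‖Df^n|_{F(x)}‖`. If `μ` is ergodic with `χ_E^-(μ) > γ₁ > γ₂ > χ_F^+(μ)`, then the measure
of `Δ(e^{(γ₁-γ₂)ℓ}, f^ℓ, E, F)` tends to `1` as `ℓ → ∞`. -/
theorem stmt_6 {X : Type*} [MetricSpace X] [CompactSpace X]
    [MeasurableSpace X] [BorelSpace X]
    (f : X → X) (hf : Continuous f)
    (μ : Measure X) [IsProbabilityMeasure μ] (herg : Ergodic f μ)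
    (mE nF : ℕ → X → ℝ)
    (hmEpos : ∀ n x, 0 < mE n x) (hnFpos : ∀ n x, 0 < nF n x)
    (hmEcont : ∀ n, Continuous (mE n)) (hnFcont : ∀ n, Continuous (nF n))
    (hmEsup : ∀ n m x, mE n x * mE m (f^[n] x) ≤ mE (n + m) x)
    (hnFsub : ∀ n m x, nF (n + m) x ≤ nF n x * nF m (f^[n] x))
    (χE χF : ℝ)
    (hχE : ∀ᵐ x ∂μ, Tendsto (fun n => Real.log (mE n x) / n) atTop (𝓝 χE))
    (hχF : ∀ᵐ x ∂μ, Tendsto (fun n => Real.log (nF n x) / n) atTop (𝓝 χF))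
    (hgap : χF < χE)
    (γ₁ γ₂ : ℝ) (hγ₁ : γ₁ < χE) (hγ₁₂ : γ₂ < γ₁) (hγ₂ : χF < γ₂) :
    Tendsto (fun ℓ : ℕ => μ {x | ∀ k : ℕ, 1 ≤ k →
        Real.exp ((γ₁ - γ₂) * ℓ) ^ k ≤
          ∏ j ∈ Finset.range k, mE ℓ (f^[j * ℓ] x) / nF ℓ (f^[j * ℓ] x)})
      atTop (𝓝 1) := by
  have hXne : Nonempty X := by
    by_contra h
    rw [not_nonempty_iff] at h
    have h1 : μ Set.univ = 1 := measure_univ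
    rw [Set.univ_eq_empty_iff.2 h, measure_empty] at h1
    exact zero_ne_one h1
  -- extrema of the time-1 cocycle
  obtain ⟨xm, -, hxm⟩ :=
    isCompact_univ.exists_isMinOn Set.univ_nonempty (hmEcont 1).continuousOn
  obtain ⟨xM, -, hxM⟩ :=
    isCompact_univ.exists_isMaxOn Set.univ_nonempty (hnFcont 1).continuousOn
  set m₀ := mE 1 xm with hm₀def
  set M₀ := nF 1 xM with hM₀def
  have hm₀pos : 0 < m₀ := hmEpos 1 xm
  have hM₀pos : 0 < M₀ := hnFpos 1 xM
  have hm₀le : ∀ x, m₀ ≤ mE 1 x := fun x => isMinOn_iff.1 hxm x (Set.mem_univ x)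
  have hM₀le : ∀ x, nF 1 x ≤ M₀ := fun x => isMaxOn_iff.1 hxM x (Set.mem_univ x)
  -- constants
  set γ₁' : ℝ := (γ₁ + χE) / 2 with hγ₁'def
  set γ₂' : ℝ := (χF + γ₂) / 2 with hγ₂'def
  set a : ℝ := γ₁' - γ₂' with hadef
  set b : ℝ := γ₁ - γ₂ with hbdef
  set C : ℝ := max 0 (Real.log M₀ - Real.log m₀) with hCdef
  have hC0 : 0 ≤ C := le_max_left _ _
  have hClog : Real.log M₀ - Real.log m₀ ≤ C := le_max_right _ _
  have hb0 : 0 < b := by rw [hbdef]; linarith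
  have hγ₁'lt : γ₁ < γ₁' := by rw [hγ₁'def]; linarith
  have hγ₂'lt : γ₂' < γ₂ := by rw [hγ₂'def]; linarith
  have hab : b < a := by rw [hadef, hbdef]; linarith
  set θ : ℝ := (a - b) / (a + C + 1) with hθdef
  have hden : 0 < a + C + 1 := by linarith
  have hθpos : 0 < θ := div_pos (by linarith) hden
  have hθkey : θ * (a + C) ≤ a - b := by
    rw [hθdef, div_mul_eq_mul_div, div_le_iff₀ hden]
    nlinarith
  -- lower bound for a single block
  have hblock : ∀ ℓ : ℕ, 1 ≤ ℓ → ∀ x,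
      -(C * ℓ) ≤ Real.log (mE ℓ x) - Real.log (nF ℓ x) := by
    intro ℓ hℓ x
    obtain ⟨n, rfl⟩ : ∃ n, ℓ = n + 1 := ⟨ℓ - 1, by omega⟩
    have h1 := cocycle_lower f mE hmEpos hmEsup hm₀pos hm₀le n x
    have h2 := cocycle_upper f nF hnFpos hnFsub hM₀pos hM₀le n x
    have h3 : ((n + 1 : ℕ) : ℝ) * Real.log m₀ ≤ Real.log (mE (n + 1) x) := by
      rw [← Real.log_pow]
      exact Real.log_le_log (pow_pos hm₀pos _) h1
    have h4 : Real.log (nF (n + 1) x) ≤ ((n + 1 : ℕ) : ℝ) * Real.log M₀ := by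
      rw [← Real.log_pow]
      exact Real.log_le_log (hnFpos _ _) h2
    have h5 : (0 : ℝ) ≤ ((n + 1 : ℕ) : ℝ) := by positivity
    nlinarith
  -- good sets
  set G : ℕ → Set X := fun N => {x | ∀ n : ℕ, N ≤ n →
      γ₁' * n ≤ Real.log (mE n x) ∧ Real.log (nF n x) ≤ γ₂' * n} with hGdef
  have hGmeas : ∀ N, MeasurableSet (G N) := by
    intro N
    have hEq : G N = ⋂ n : ℕ, {x | N ≤ n →
        (γ₁' * n ≤ Real.log (mE n x) ∧ Real.log (nF n x) ≤ γ₂' * n)} := by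
      ext x; simp [hGdef, Set.mem_iInter]
    rw [hEq]
    refine MeasurableSet.iInter fun n => ?_
    by_cases hn : N ≤ n
    · simp only [hn, true_implies]
      rw [Set.setOf_and]
      have hmlog : Measurable fun x => Real.log (mE n x) :=
        ((hmEcont n).log fun x => (hmEpos n x).ne').measurable
      have hnlog : Measurable fun x => Real.log (nF n x) :=
        ((hnFcont n).log fun x => (hnFpos n x).ne').measurable
      exact (measurableSet_le measurable_const hmlog).inter
        (measurableSet_le hnlog measurable_const)
    · simp [hn]
  have hGmono : Monotone G := fun N M h x hx n hn => hx n (le_trans h hn)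
  -- the measure of the complements of the good sets tends to 0
  have hGtend : Tendsto (fun N => μ (G N)ᶜ) atTop (𝓝 0) := by
    have hae : ∀ᵐ x ∂μ, x ∈ ⋃ N, G N := by
      filter_upwards [hχE, hχF] with x h1 h2
      have h3 : ∀ᶠ n : ℕ in atTop, γ₁' < Real.log (mE n x) / n :=
        h1.eventually_const_lt (by rw [hγ₁'def]; linarith)
      have h4 : ∀ᶠ n : ℕ in atTop, Real.log (nF n x) / n < γ₂' :=
        h2.eventually_lt_const (by rw [hγ₂'def]; linarith)
      obtain ⟨N, hN⟩ := eventually_atTop.1 ((h3.and h4).and (eventually_ge_atTop 1))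
      refine Set.mem_iUnion.2 ⟨N, fun n hn => ?_⟩
      obtain ⟨⟨hA, hB⟩, hn1⟩ := hN n hn
      have hn0 : (0 : ℝ) < n := by exact_mod_cast hn1
      constructor
      · exact le_of_lt ((lt_div_iff₀ hn0).1 hA)
      · exact le_of_lt ((div_lt_iff₀ hn0).1 hB)
    have h0 : μ (⋃ N, G N)ᶜ = 0 := ae_iff.1 hae
    have h9 : μ (⋂ N, (G N)ᶜ) = 0 := by rw [← Set.compl_iUnion]; exact h0
    have := tendsto_measure_iInter_atTop (μ := μ)
      (fun N => ((hGmeas N).compl).nullMeasurableSet)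
      (fun N M h => Set.compl_subset_compl.2 (hGmono h))
      ⟨0, measure_ne_top μ _⟩
    rw [h9] at this
    exact this
  -- measurability of the target sets
  have hΔmeas : ∀ ℓ : ℕ, MeasurableSet {x : X | ∀ k : ℕ, 1 ≤ k →
      Real.exp ((γ₁ - γ₂) * ℓ) ^ k ≤
        ∏ j ∈ Finset.range k, mE ℓ (f^[j * ℓ] x) / nF ℓ (f^[j * ℓ] x)} := by
    intro ℓ
    have hEq : {x : X | ∀ k : ℕ, 1 ≤ k →
        Real.exp ((γ₁ - γ₂) * ℓ) ^ k ≤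
          ∏ j ∈ Finset.range k, mE ℓ (f^[j * ℓ] x) / nF ℓ (f^[j * ℓ] x)}
        = ⋂ k : ℕ, {x | 1 ≤ k → Real.exp ((γ₁ - γ₂) * ℓ) ^ k ≤
          ∏ j ∈ Finset.range k, mE ℓ (f^[j * ℓ] x) / nF ℓ (f^[j * ℓ] x)} := by
      ext x; simp [Set.mem_iInter]
    rw [hEq]
    refine MeasurableSet.iInter fun k => ?_
    by_cases hk : 1 ≤ k
    · simp only [hk, true_implies]
      refine measurableSet_le measurable_const (Continuous.measurable ?_)
      refine continuous_finset_prod _ fun j _ => Continuous.div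
        ((hmEcont ℓ).comp (hf.iterate (j * ℓ)))
        ((hnFcont ℓ).comp (hf.iterate (j * ℓ)))
        (fun x => (hnFpos ℓ _).ne')
    · simp [hk]
  -- the key pointwise estimate
  have hkey : ∀ N ℓ : ℕ, 1 ≤ N → N ≤ ℓ → ∀ x : X,
      (∀ k : ℕ, 1 ≤ k →
        (∑ j ∈ Finset.range k, (G N)ᶜ.indicator (fun _ => (1 : ℝ)) ((f^[ℓ])^[j] x)) ≤ θ * k) →
      (∀ k : ℕ, 1 ≤ k → Real.exp ((γ₁ - γ₂) * ℓ) ^ k ≤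
        ∏ j ∈ Finset.range k, mE ℓ (f^[j * ℓ] x) / nF ℓ (f^[j * ℓ] x)) := by
    intro N ℓ hN hℓ x hx k hk
    have hℓ1 : 1 ≤ ℓ := le_trans hN hℓ
    have hℓR : (1 : ℝ) ≤ ℓ := by exact_mod_cast hℓ1
    have hkR : (1 : ℝ) ≤ k := by exact_mod_cast hk
    have hiter : ∀ j : ℕ, f^[j * ℓ] x = (f^[ℓ])^[j] x := by
      intro j; rw [mul_comm, Function.iterate_mul]
    -- per-block bound
    have hb1 : ∀ j : ℕ,
        a * ℓ - (a * ℓ + C * ℓ) * (G N)ᶜ.indicator (fun _ => (1 : ℝ)) ((f^[ℓ])^[j] x)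
        ≤ Real.log (mE ℓ ((f^[ℓ])^[j] x)) - Real.log (nF ℓ ((f^[ℓ])^[j] x)) := by
      intro j
      set y := (f^[ℓ])^[j] x with hydef
      by_cases hy : y ∈ G N
      · rw [Set.indicator_of_notMem (by simpa using hy)]
        obtain ⟨h1, h2⟩ := hy ℓ hℓ
        have hae : a * ℓ = γ₁' * ℓ - γ₂' * ℓ := by rw [hadef]; ring
        simp only [mul_zero, sub_zero]
        linarith
      · rw [Set.indicator_of_mem (by simpa using hy)]
        have h1 := hblock ℓ hℓ1 y
        have : a * ℓ - (a * ℓ + C * ℓ) * 1 = -(C * ℓ) := by ring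
        linarith [this ▸ h1]
    have hind_nonneg : (0 : ℝ) ≤
        ∑ j ∈ Finset.range k, (G N)ᶜ.indicator (fun _ => (1 : ℝ)) ((f^[ℓ])^[j] x) :=
      Finset.sum_nonneg fun j _ => Set.indicator_nonneg (fun _ _ => zero_le_one) _
    have hsum : (k : ℝ) * ((γ₁ - γ₂) * ℓ) ≤
        ∑ j ∈ Finset.range k,
          (Real.log (mE ℓ ((f^[ℓ])^[j] x)) - Real.log (nF ℓ ((f^[ℓ])^[j] x))) := by
      have hS := hx k hk
      set S := ∑ j ∈ Finset.range k, (G N)ᶜ.indicator (fun _ => (1 : ℝ)) ((f^[ℓ])^[j] x) with hSdef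
      have hl0 : (0 : ℝ) ≤ (ℓ : ℝ) := by positivity
      have ha0 : (0 : ℝ) ≤ a := le_of_lt (lt_trans hb0 hab)
      have hc0 : (0 : ℝ) ≤ a * ℓ + C * ℓ :=
        add_nonneg (mul_nonneg ha0 hl0) (mul_nonneg hC0 hl0)
      have hstep : (k : ℝ) * (a * ℓ) - (a * ℓ + C * ℓ) * S
          ≤ ∑ j ∈ Finset.range k,
            (Real.log (mE ℓ ((f^[ℓ])^[j] x)) - Real.log (nF ℓ ((f^[ℓ])^[j] x))) := by
        have := Finset.sum_le_sum fun j (_ : j ∈ Finset.range k) => hb1 j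
        calc (k : ℝ) * (a * ℓ) - (a * ℓ + C * ℓ) * S
            = ∑ j ∈ Finset.range k, (a * ℓ -
              (a * ℓ + C * ℓ) * (G N)ᶜ.indicator (fun _ => (1 : ℝ)) ((f^[ℓ])^[j] x)) := by
              rw [Finset.sum_sub_distrib, Finset.sum_const, ← Finset.mul_sum, ← hSdef]
              simp only [nsmul_eq_mul, Finset.card_range]
              try ring
          _ ≤ _ := this
      have harith : (k : ℝ) * ((γ₁ - γ₂) * ℓ) ≤ (k : ℝ) * (a * ℓ) - (a * ℓ + C * ℓ) * S := by
        have h1 : (a * ℓ + C * ℓ) * S ≤ (a * ℓ + C * ℓ) * (θ * k) :=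
          mul_le_mul_of_nonneg_left hS hc0
        have h2 : θ * (a + C) * ((ℓ : ℝ) * k) ≤ (a - b) * ((ℓ : ℝ) * k) :=
          mul_le_mul_of_nonneg_right hθkey (by positivity)
        have hgb : γ₁ - γ₂ = b := by rw [hbdef]
        have e1 : (a * ℓ + C * ℓ) * (θ * k) = θ * (a + C) * ((ℓ : ℝ) * k) := by ring
        have e2 : (a - b) * ((ℓ : ℝ) * k) = (k : ℝ) * (a * ℓ) - (k : ℝ) * (b * ℓ) := by ring
        have e3 : (k : ℝ) * ((γ₁ - γ₂) * ℓ) = (k : ℝ) * (b * ℓ) := by rw [hgb]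
        linarith
      linarith
    -- conclude via exponentials
    calc Real.exp ((γ₁ - γ₂) * ℓ) ^ k
        = Real.exp ((k : ℝ) * ((γ₁ - γ₂) * ℓ)) := (Real.exp_nat_mul _ k).symm
      _ ≤ Real.exp (∑ j ∈ Finset.range k,
            (Real.log (mE ℓ ((f^[ℓ])^[j] x)) - Real.log (nF ℓ ((f^[ℓ])^[j] x)))) :=
          Real.exp_le_exp.2 hsum
      _ = ∏ j ∈ Finset.range k,
            Real.exp (Real.log (mE ℓ ((f^[ℓ])^[j] x)) - Real.log (nF ℓ ((f^[ℓ])^[j] x))) :=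
          Real.exp_sum _ _
      _ = ∏ j ∈ Finset.range k, mE ℓ (f^[j * ℓ] x) / nF ℓ (f^[j * ℓ] x) := by
          refine Finset.prod_congr rfl fun j _ => ?_
          rw [← Real.log_div (hmEpos ℓ _).ne' (hnFpos ℓ _).ne',
            Real.exp_log (div_pos (hmEpos ℓ _) (hnFpos ℓ _)), hiter j]
  -- measure-preservation of iterates
  have hmp : ∀ ℓ : ℕ, MeasurePreserving f^[ℓ] μ μ :=
    fun ℓ => herg.toMeasurePreserving.iterate ℓ
  -- the complements tend to zero in measure
  have hcompl : Tendsto (fun ℓ : ℕ => μ {x : X | ∀ k : ℕ, 1 ≤ k →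
      Real.exp ((γ₁ - γ₂) * ℓ) ^ k ≤
        ∏ j ∈ Finset.range k, mE ℓ (f^[j * ℓ] x) / nF ℓ (f^[j * ℓ] x)}ᶜ)
      atTop (𝓝 0) := by
    rw [ENNReal.tendsto_nhds_zero]
    intro ε hε
    have hc0 : ENNReal.ofReal θ ≠ 0 := (ENNReal.ofReal_pos.2 hθpos).ne'
    have hct : ENNReal.ofReal θ ≠ ⊤ := ENNReal.ofReal_ne_top
    have hεθ : 0 < ε * ENNReal.ofReal θ :=
      ENNReal.mul_pos hε.ne' hc0
    obtain ⟨N, hNsm, hN1⟩ :=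
      ((hGtend.eventually_lt_const hεθ).and (eventually_ge_atTop 1)).exists
    filter_upwards [eventually_ge_atTop N] with ℓ hℓ
    have hsub : {x : X | ∀ k : ℕ, 1 ≤ k →
        Real.exp ((γ₁ - γ₂) * ℓ) ^ k ≤
          ∏ j ∈ Finset.range k, mE ℓ (f^[j * ℓ] x) / nF ℓ (f^[j * ℓ] x)}ᶜ ⊆
        {x : X | ∃ k : ℕ, 1 ≤ k ∧ θ * k <
          ∑ j ∈ Finset.range k, (G N)ᶜ.indicator (fun _ => (1 : ℝ)) ((f^[ℓ])^[j] x)} := by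
      intro x hxc
      by_contra hxB
      rw [Set.mem_setOf_eq] at hxB
      push_neg at hxB
      exact hxc (hkey N ℓ hN1 hℓ x hxB)
    calc μ _ ≤ μ {x : X | ∃ k : ℕ, 1 ≤ k ∧ θ * k <
          ∑ j ∈ Finset.range k, (G N)ᶜ.indicator (fun _ => (1 : ℝ)) ((f^[ℓ])^[j] x)} :=
          measure_mono hsub
      _ ≤ μ (G N)ᶜ / ENNReal.ofReal θ :=
          maximal_count μ (f^[ℓ]) (hf.measurable.iterate ℓ) (hmp ℓ) (G N) (hGmeas N) θ hθpos
      _ ≤ (ε * ENNReal.ofReal θ) / ENNReal.ofReal θ :=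
          ENNReal.div_le_div_right hNsm.le _
      _ = ε := by rw [mul_div_assoc, ENNReal.div_self hc0 hct, mul_one]
  -- conclude
  have hΔ1 : (fun ℓ : ℕ => μ {x : X | ∀ k : ℕ, 1 ≤ k →
      Real.exp ((γ₁ - γ₂) * ℓ) ^ k ≤
        ∏ j ∈ Finset.range k, mE ℓ (f^[j * ℓ] x) / nF ℓ (f^[j * ℓ] x)})
      = fun ℓ : ℕ => 1 - μ {x : X | ∀ k : ℕ, 1 ≤ k →
      Real.exp ((γ₁ - γ₂) * ℓ) ^ k ≤
        ∏ j ∈ Finset.range k, mE ℓ (f^[j * ℓ] x) / nF ℓ (f^[j * ℓ] x)}ᶜ := by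
    funext ℓ
    have := measure_compl ((hΔmeas ℓ).compl) (measure_ne_top μ _)
    rw [compl_compl, measure_univ] at this
    exact this
  rw [hΔ1]
  have := ENNReal.Tendsto.sub (tendsto_const_nhds (x := (1 : ENNReal)) (f := atTop))
    hcompl (Or.inl ENNReal.one_ne_top)
  simpa using this
end
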